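/- arXiv:0912.0385 — 3 statements merged into one kernel-verified Lean document; each statement's English description precedes it below -/
import Mathlib

section
/- With λ an elementary character datum at α = α_{i,j} and L = ⟨X_β : β ∈ leg(α)⟩, the restriction of the induced character λ^U to L equals the regular character of L. -/
open Matrix CategoryTheory
open scoped Classical

/-- A matrix is upper unitriangular: ones on the diagonal, zeros below. -/
def IsUnitriangular {n : ℕ} {F : Type} [Field F] (M : Matrix (Fin n) (Fin n) F) : Prop :=
  (∀ i, M i i = 1) ∧ ∀ ⦃i j : Fin n⦄, j < i → M i j = 0

theorem IsUnitriangular.blockTriangular {n : ℕ} {F : Type} [Field F]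
    {M : Matrix (Fin n) (Fin n) F} (h : IsUnitriangular M) : M.BlockTriangular id :=
  fun _ _ hij => h.2 hij

theorem IsUnitriangular.mul {n : ℕ} {F : Type} [Field F]
    {A B : Matrix (Fin n) (Fin n) F} (hA : IsUnitriangular A) (hB : IsUnitriangular B) :
    IsUnitriangular (A * B) := by
  constructor
  · intro i
    rw [Matrix.mul_apply, Finset.sum_eq_single i]
    · rw [hA.1, hB.1, one_mul]
    · intro k _ hk
      rcases lt_or_gt_of_ne hk with h | h
      · rw [hA.2 h, zero_mul]
      · rw [hB.2 h, mul_zero]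
    · simp
  · intro i j hij
    rw [Matrix.mul_apply]
    apply Finset.sum_eq_zero
    intro k _
    rcases le_or_gt k j with h | h
    · rw [hA.2 (lt_of_le_of_lt h hij), zero_mul]
    · rw [hB.2 h, mul_zero]

theorem IsUnitriangular.diag_of_mul_eq_one {n : ℕ} {F : Type} [Field F]
    {A B : Matrix (Fin n) (Fin n) F} (hBlow : ∀ ⦃i j : Fin n⦄, j < i → B i j = 0)
    (hA : IsUnitriangular A) (h : B * A = 1) : ∀ i, B i i = 1 := by
  intro i
  have := congrArg (fun M => M i i) h
  simp only [Matrix.one_apply_eq] at this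
  rw [Matrix.mul_apply, Finset.sum_eq_single i] at this
  · rwa [hA.1, mul_one] at this
  · intro k _ hk
    rcases lt_or_gt_of_ne hk with h' | h'
    · rw [hBlow h', zero_mul]
    · rw [hA.2 h', mul_zero]
  · simp

/-- The group `U_n(q)` of upper unitriangular matrices, as a subgroup of `GL n F`. -/
def UT (n : ℕ) (F : Type) [Field F] : Subgroup (GL (Fin n) F) where
  carrier := {M | IsUnitriangular (M : Matrix (Fin n) (Fin n) F)}
  one_mem' := by
    constructor
    · intro i; simp
    · intro i j hij; exact Matrix.one_apply_ne (ne_of_gt hij)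
  mul_mem' := by
    intro A B hA hB
    exact hA.mul hB
  inv_mem' := by
    intro M hM
    have : Invertible (M : Matrix (Fin n) (Fin n) F) := M.invertible
    have hinv : ((M⁻¹ : GL (Fin n) F) : Matrix (Fin n) (Fin n) F)
        = (M : Matrix (Fin n) (Fin n) F)⁻¹ := Matrix.coe_units_inv M
    have hbt := Matrix.blockTriangular_inv_of_blockTriangular hM.blockTriangular
    have hlow : ∀ ⦃i j : Fin n⦄, j < i →
        ((M⁻¹ : GL (Fin n) F) : Matrix (Fin n) (Fin n) F) i j = 0 := by
      intro i j hij
      rw [hinv]; exact hbt hij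
    refine ⟨?_, hlow⟩
    intro i
    rw [hinv]
    refine IsUnitriangular.diag_of_mul_eq_one (fun i j hij => hbt hij) hM ?_ i
    exact Matrix.nonsing_inv_mul _ ((Matrix.isUnit_iff_isUnit_det _).mp M.isUnit)
/-- The root subgroup `X_{(a,b)}` (as a set of elements of `UT n F`): matrices
`1 + c · e_{a,b}`. In the paper's notation the root `α_{i,j}` corresponds to the
matrix position `(i, j+1)`. -/
def rootSet (n : ℕ) (F : Type) [Field F] (a b : Fin n) : Set (UT n F) :=
  {M | ∃ c : F, ((M : GL (Fin n) F) : Matrix (Fin n) (Fin n) F)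
    = 1 + Matrix.single a b c}

/-- The set of positive roots, as matrix positions `(a, b)` with `a < b`. -/
def posRoots (n : ℕ) : Set (Fin n × Fin n) := {p | p.1 < p.2}

/-- The arm of the root at position `(a,b)`: positions `(a, c)` with `a < c < b`. -/
def arm {n : ℕ} (a b : Fin n) : Set (Fin n × Fin n) := {p | p.1 = a ∧ a < p.2 ∧ p.2 < b}

/-- The leg of the root at position `(a,b)`: positions `(c, b)` with `a < c < b`. -/
def leg {n : ℕ} (a b : Fin n) : Set (Fin n × Fin n) := {p | p.2 = b ∧ a < p.1 ∧ p.1 < b}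

/-- The hook of the root at position `(a,b)`. -/
def hook {n : ℕ} (a b : Fin n) : Set (Fin n × Fin n) := {(a, b)} ∪ arm a b ∪ leg a b

/-- Subgroup of `UT n F` generated by the root subgroups at positions in `S`. -/
def groupOf (n : ℕ) (F : Type) [Field F] (S : Set (Fin n × Fin n)) : Subgroup (UT n F) :=
  Subgroup.closure (⋃ p ∈ S, rootSet n F p.1 p.2)

/-- The hook group `H(α)` at position `(a,b)`. -/
def hookGroup (n : ℕ) (F : Type) [Field F] (a b : Fin n) : Subgroup (UT n F) :=
  groupOf n F (hook a b)

/-- The base group `V_α = ⟨X_β : β ∈ Σ⁺ \ arm(α)⟩` at position `(a,b)`. -/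
def Vgroup (n : ℕ) (F : Type) [Field F] (a b : Fin n) : Subgroup (UT n F) :=
  groupOf n F (posRoots n \ arm a b)

/-- The induced character: characters of a subgroup `H ≤ G` are recorded as functions
`G → ℂ` (only the values on `H` matter). -/
noncomputable def ind {G : Type} [Group G] (H : Subgroup G) (f : G → ℂ) : G → ℂ :=
  fun g => (Nat.card H : ℂ)⁻¹ * ∑ᶠ x : G, if x⁻¹ * g * x ∈ H then f (x⁻¹ * g * x) else 0

/-- `χ : G → ℂ` is the character of some irreducible complex representation of `G`. -/
def IsIrrChar (G : Type) [Group G] (χ : G → ℂ) : Prop :=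
  ∃ V : FDRep ℂ G, Simple V ∧ V.character = χ

/-- The standard inner product of class functions; for characters `χ`, `ψ` with `ψ`
irreducible this is the multiplicity of `ψ` in `χ`. -/
noncomputable def innerChar {G : Type} [Group G] (χ ψ : G → ℂ) : ℂ :=
  (Nat.card G : ℂ)⁻¹ * ∑ᶠ g : G, χ g * (starRingEnd ℂ) (ψ g)

/-- A datum for an elementary character at the root position `(a,b)`: a function
`f : UT n F → ℂ` which is multiplicative on `V_α` (hence a linear character of `V_α`,
automatically trivial on `[V_α, V_α]`), trivial on every root subgroup `X_β ⊆ V_α`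
with `β ≠ α`, and nontrivial on `X_α`. -/
structure IsElemDatum (n : ℕ) (F : Type) [Field F] (a b : Fin n) (f : UT n F → ℂ) : Prop where
  mul_mem : ∀ x ∈ Vgroup n F a b, ∀ y ∈ Vgroup n F a b, f (x * y) = f x * f y
  map_one : f 1 = 1
  triv : ∀ p ∈ posRoots n \ arm a b, p ≠ (a, b) → ∀ x ∈ rootSet n F p.1 p.2, f x = 1
  nontriv : ∃ x ∈ rootSet n F a b, f x ≠ 1

/-- The elementary character `λ^U` at position `(a,b)` attached to the datum `f`. -/
noncomputable def elemChar (n : ℕ) (F : Type) [Field F] (a b : Fin n) (f : UT n F → ℂ) :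
    UT n F → ℂ :=
  ind (Vgroup n F a b) f

/-- Two root positions are separate if they share no row and no column. -/
def Separate {n : ℕ} (p p' : Fin n × Fin n) : Prop := p.1 ≠ p'.1 ∧ p.2 ≠ p'.2

/-- A basic set: a nonempty set of pairwise separate positive root positions. -/
def IsBasicSet {n : ℕ} (D : Finset (Fin n × Fin n)) : Prop :=
  D.Nonempty ∧ (∀ p ∈ D, p.1 < p.2) ∧ ∀ p ∈ D, ∀ p' ∈ D, p ≠ p' → Separate p p'

/-- `ψ` is a basic character: a tensor (pointwise) product of elementary characters
over a basic set. -/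
def IsBasicChar (n : ℕ) (F : Type) [Field F] (ψ : UT n F → ℂ) : Prop :=
  ∃ (D : Finset (Fin n × Fin n)) (φ : Fin n × Fin n → (UT n F → ℂ)),
    IsBasicSet D ∧ (∀ p ∈ D, IsElemDatum n F p.1 p.2 (φ p)) ∧
      ψ = ∏ p ∈ D, elemChar n F p.1 p.2 (φ p)

/-- Maximal exponent `μ(n)`: `μ(2m) = m(m-1)`, `μ(2m+1) = m²`. -/
def muExp (n : ℕ) : ℕ := (n / 2) * ((n - 1) / 2)

section Work
namespace ElemLeg
open Matrix
variable {n : ℕ} {F : Type} [Field F]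

/-- The underlying matrix of an element of `UT n F`. -/
def mat (M : UT n F) : Matrix (Fin n) (Fin n) F :=
  ((M : GL (Fin n) F) : Matrix (Fin n) (Fin n) F)

lemma mat_mul (M N : UT n F) : mat (M * N) = mat M * mat N := rfl

lemma mat_one : mat (1 : UT n F) = 1 := rfl

lemma mat_inj {M N : UT n F} (h : mat M = mat N) : M = N :=
  Subtype.ext (Units.ext h)

lemma mat_tri (M : UT n F) : IsUnitriangular (mat M) := M.2

lemma elem_mul (p q : Fin n) (h : p ≠ q) (c d : F) :
    (1 + Matrix.single p q c) * (1 + Matrix.single p q d)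
      = 1 + Matrix.single p q (c + d) := by
  have h0 : Matrix.single p q c * Matrix.single p q d = 0 :=
    Matrix.single_mul_single_of_ne c p q p (Ne.symm h) d
  rw [mul_add, add_mul, add_mul, h0, Matrix.single_add]
  simp only [mul_one, one_mul, add_zero]
  abel

lemma isUnitriangular_one_add_std {p q : Fin n} (h : p < q) (c : F) :
    IsUnitriangular (1 + Matrix.single p q c) := by
  constructor
  · intro i
    have hne : ¬(p = i ∧ q = i) := by rintro ⟨rfl, rfl⟩; exact lt_irrefl _ h
    have h1 : Matrix.single p q c i i = 0 := Matrix.single_apply_of_ne p q c i i hne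
    rw [Matrix.add_apply, Matrix.one_apply_eq, h1, add_zero]
  · intro i j hij
    have hne : ¬(p = i ∧ q = j) := by rintro ⟨rfl, rfl⟩; exact absurd h (not_lt.2 hij.le)
    have h1 : Matrix.single p q c i j = 0 := Matrix.single_apply_of_ne p q c i j hne
    rw [Matrix.add_apply, Matrix.one_apply_ne (ne_of_gt hij), h1, add_zero]

/-- The root element `x_{(p,q)}(c) = 1 + c e_{p,q}`. -/
def rootElt (p q : Fin n) (h : p < q) (c : F) : UT n F :=
  ⟨⟨1 + Matrix.single p q c, 1 + Matrix.single p q (-c),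
    by rw [elem_mul p q (ne_of_lt h)]; simp,
    by rw [elem_mul p q (ne_of_lt h)]; simp⟩,
   isUnitriangular_one_add_std h c⟩

lemma mat_rootElt (p q : Fin n) (h : p < q) (c : F) :
    mat (rootElt p q h c) = 1 + Matrix.single p q c := rfl

lemma mat_rootElt_inv (p q : Fin n) (h : p < q) (c : F) :
    mat ((rootElt p q h c)⁻¹) = 1 + Matrix.single p q (-c) := rfl

lemma rootElt_mem_rootSet (p q : Fin n) (h : p < q) (c : F) :
    rootElt p q h c ∈ rootSet n F p q := ⟨c, rfl⟩

lemma rootElt_mul (p q : Fin n) (h : p < q) (c d : F) :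
    rootElt p q h c * rootElt p q h d = rootElt p q h (c + d) :=
  mat_inj (by rw [mat_mul, mat_rootElt, mat_rootElt, mat_rootElt,
    elem_mul p q (ne_of_lt h)])

end ElemLeg
end Work
section Work2
namespace ElemLeg
open Matrix
variable {n : ℕ} {F : Type} [Field F]

lemma std_apply (p q i j : Fin n) (c : F) :
    Matrix.single p q c i j = if p = i ∧ q = j then c else 0 := rfl

/-- entries of `∑ k in s, c_k e_{k,b}` -/
lemma sum_std_apply (s : Finset (Fin n)) (b : Fin n) (t : Fin n → F) (i j : Fin n) :
    (∑ k ∈ s, Matrix.single k b (t k)) i j = if i ∈ s ∧ j = b then t i else 0 := by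
  classical
  rw [Matrix.sum_apply]
  simp only [std_apply]
  rw [Finset.sum_congr rfl (fun k _ => ?_), Finset.sum_ite_eq' s i (fun k => if b = j then t k else 0)]
  · split_ifs with h1 h2 h3 h4 <;> simp_all [eq_comm]
  · rw [ite_and]

/-- entries of `M * ∑ k in s, c_k e_{a,k}` (sum of row-`a` std matrices) -/
lemma mul_sum_std_row_apply (M : Matrix (Fin n) (Fin n) F) (s : Finset (Fin n)) (a : Fin n)
    (t : Fin n → F) (i j : Fin n) :
    (M * ∑ k ∈ s, Matrix.single a k (t k)) i j = if j ∈ s then M i a * t j else 0 := by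
  classical
  rw [Finset.mul_sum, Matrix.sum_apply]
  have : ∀ k ∈ s, (M * Matrix.single a k (t k)) i j
      = if k = j then M i a * t k else 0 := by
    intro k _
    split_ifs with h
    · subst h; exact Matrix.mul_single_apply_same (t k) a k i M
    · exact Matrix.mul_single_apply_of_ne (t k) a k i j (Ne.symm h) M
  rw [Finset.sum_congr rfl this, Finset.sum_ite_eq' s j (fun k => M i a * t k)]

/-- entries of `M * ∑ k in s, c_k e_{k,b}` (sum of column-`b` std matrices) -/
lemma mul_sum_std_col_apply (M : Matrix (Fin n) (Fin n) F) (s : Finset (Fin n)) (b : Fin n)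
    (t : Fin n → F) (i j : Fin n) :
    (M * ∑ k ∈ s, Matrix.single k b (t k)) i j
      = if j = b then ∑ k ∈ s, M i k * t k else 0 := by
  classical
  rw [Finset.mul_sum, Matrix.sum_apply]
  split_ifs with h
  · subst h
    exact Finset.sum_congr rfl fun k _ => Matrix.mul_single_apply_same (t k) k _ i M
  · exact Finset.sum_eq_zero fun k _ =>
      Matrix.mul_single_apply_of_ne (t k) k b i j h M

lemma mul_std_apply (M : Matrix (Fin n) (Fin n) F) (p q i j : Fin n) (c : F) :
    (M * Matrix.single p q c) i j = if j = q then M i p * c else 0 := by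
  split_ifs with h
  · subst h; exact Matrix.mul_single_apply_same c p _ i M
  · exact Matrix.mul_single_apply_of_ne c p q i j h M

end ElemLeg
end Work2
section Work3
namespace ElemLeg
open Matrix
variable {n : ℕ} {F : Type} [Field F]

/-- closure induction with predicate closed under `1` and `*` only (finite group) -/
lemma pred_pow {G : Type} [Group G] (P : G → Prop) (h1 : P 1)
    (hmul : ∀ x y, P x → P y → P (x * y)) (x : G) (hx : P x) : ∀ k, P (x ^ k) := by
  intro k
  induction k with
  | zero => simpa using h1
  | succ m ih => rw [pow_succ]; exact hmul _ _ ih hx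

lemma pred_inv {G : Type} [Group G] [Finite G] (P : G → Prop) (h1 : P 1)
    (hmul : ∀ x y, P x → P y → P (x * y)) (x : G) (hx : P x) : P x⁻¹ := by
  have ho : 0 < orderOf x := orderOf_pos x
  have h : x ^ (orderOf x - 1) * x = 1 := by
    rw [← pow_succ, Nat.sub_add_cancel ho, pow_orderOf_eq_one]
  have hinv : x⁻¹ = x ^ (orderOf x - 1) := (eq_inv_of_mul_eq_one_left h).symm
  rw [hinv]
  exact pred_pow P h1 hmul x hx _

lemma groupOf_pred {S : Set (Fin n × Fin n)} [Finite (UT n F)] (P : UT n F → Prop)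
    (h1 : P 1) (hmul : ∀ x y, P x → P y → P (x * y))
    (hgen : ∀ p ∈ S, ∀ x ∈ rootSet n F p.1 p.2, P x) :
    ∀ x ∈ groupOf n F S, P x := by
  intro x hx
  refine Subgroup.closure_induction (p := fun g _ => P g) ?_ h1
    (fun x y _ _ hx hy => hmul x y hx hy) (fun x _ hx => pred_inv P h1 hmul x hx) hx
  intro y hy
  obtain ⟨p, hp, hyp⟩ := Set.mem_iUnion₂.mp hy
  exact hgen p hp y hyp

/-- support of an element: positions of nonzero off-diagonal entries -/
noncomputable def supp (M : UT n F) : Finset (Fin n × Fin n) :=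
  Finset.univ.filter (fun pq => pq.1 < pq.2 ∧ mat M pq.1 pq.2 ≠ 0)

lemma eq_one_of_supp_empty (M : UT n F) (h : supp M = ∅) : M = 1 := by
  apply mat_inj
  ext i j
  rcases lt_trichotomy i j with hij | rfl | hij
  · have : (i, j) ∉ supp M := by rw [h]; exact Finset.notMem_empty _
    simp only [supp, Finset.mem_filter, Finset.mem_univ, true_and, not_and, not_not] at this
    rw [this hij, mat_one, Matrix.one_apply_ne (ne_of_lt hij)]
  · rw [(mat_tri M).1, mat_one, Matrix.one_apply_eq]
  · rw [(mat_tri M).2 hij, mat_one, Matrix.one_apply_ne (ne_of_gt hij)]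

/-- The key "elimination" lemma: a unitriangular matrix whose nonzero off-diagonal
entries all lie in `S` belongs to the subgroup generated by the root subgroups in `S`. -/
lemma mem_groupOf_of_support {S : Set (Fin n × Fin n)} :
    ∀ (k : ℕ) (M : UT n F), (supp M).card ≤ k →
      (∀ p q : Fin n, p < q → mat M p q ≠ 0 → (p, q) ∈ S) → M ∈ groupOf n F S := by
  intro k
  induction k with
  | zero =>
    intro M hcard _
    have : supp M = ∅ := Finset.card_eq_zero.mp (Nat.le_zero.mp hcard)
    rw [eq_one_of_supp_empty M this]
    exact Subgroup.one_mem _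
  | succ m ih =>
    intro M hcard hS
    by_cases hemp : supp M = ∅
    · rw [eq_one_of_supp_empty M hemp]; exact Subgroup.one_mem _
    have hne : (supp M).Nonempty := Finset.nonempty_of_ne_empty hemp
    have hneI : ((supp M).image Prod.snd).Nonempty := hne.image _
    set q : Fin n := ((supp M).image Prod.snd).min' hneI with hq
    obtain ⟨pq, hpq, hsnd⟩ := Finset.mem_image.mp (Finset.min'_mem _ hneI)
    set p : Fin n := pq.1 with hp
    have hpqmem : (p, q) ∈ supp M := by rw [hp, hq, ← hsnd]; exact hpq
    simp only [supp, Finset.mem_filter, Finset.mem_univ, true_and] at hpqmem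
    obtain ⟨hplt, hcne⟩ := hpqmem
    set c : F := mat M p q with hc
    -- minimality of the column q
    have hmin : ∀ i j : Fin n, i < j → mat M i j ≠ 0 → q ≤ j := by
      intro i j hij hne0
      exact Finset.min'_le _ _ (Finset.mem_image.mpr
        ⟨(i, j), Finset.mem_filter.mpr ⟨Finset.mem_univ _, hij, hne0⟩, rfl⟩)
    have hclean : ∀ i : Fin n, i < p → mat M i p = 0 := by
      intro i hip
      by_contra h0
      exact absurd (hmin i p hip h0) (not_le.mpr hplt)
    set g : UT n F := rootElt p q hplt c with hg
    set M' : UT n F := M * g⁻¹ with hM'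
    have key : ∀ i j : Fin n, mat M' i j
        = if i = p ∧ j = q then 0 else mat M i j := by
      intro i j
      have : mat M' = mat M * (1 + Matrix.single p q (-c)) := by
        rw [hM', mat_mul, mat_rootElt_inv]
      rw [this, mul_add, mul_one, Matrix.add_apply, mul_std_apply]
      by_cases hj : j = q
      · subst hj
        by_cases hi : i = p
        · subst hi
          rw [if_pos rfl, if_pos ⟨rfl, rfl⟩, (mat_tri M).1, ← hc]
          ring
        · have h0 : mat M i p = 0 := by
            rcases lt_or_gt_of_ne hi with h | h
            · exact hclean i h
            · exact (mat_tri M).2 h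
          rw [if_pos rfl, if_neg (fun hh => hi hh.1), h0]
          ring
      · rw [if_neg hj, if_neg (fun hh => hj hh.2), add_zero]
    have hsub : supp M' ⊆ (supp M).erase (p, q) := by
      intro pq' hmem
      simp only [supp, Finset.mem_filter, Finset.mem_univ, true_and] at hmem
      obtain ⟨hlt', hne'⟩ := hmem
      rw [key] at hne'
      have hne'' : ¬(pq'.1 = p ∧ pq'.2 = q) := fun hh => by
        rw [if_pos hh] at hne'; exact hne' rfl
      rw [if_neg hne''] at hne'
      refine Finset.mem_erase.mpr ⟨?_, Finset.mem_filter.mpr ⟨Finset.mem_univ _, hlt', hne'⟩⟩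
      intro hh
      exact hne'' ⟨by rw [hh], by rw [hh]⟩
    have hcard' : (supp M').card ≤ m := by
      calc (supp M').card ≤ ((supp M).erase (p, q)).card := Finset.card_le_card hsub
        _ = (supp M).card - 1 := Finset.card_erase_of_mem (by
              simp only [supp, Finset.mem_filter, Finset.mem_univ, true_and]
              exact ⟨hplt, hcne⟩)
        _ ≤ m := by omega
    have hS' : ∀ p' q' : Fin n, p' < q' → mat M' p' q' ≠ 0 → (p', q') ∈ S := by
      intro p' q' hlt' hne'
      rw [key] at hne'
      by_cases hh : p' = p ∧ q' = q
      · rw [if_pos hh] at hne'; exact absurd rfl hne'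
      · rw [if_neg hh] at hne'
        exact hS p' q' hlt' hne'
    have hM'mem : M' ∈ groupOf n F S := ih M' hcard' hS'
    have hgmem : g ∈ groupOf n F S :=
      Subgroup.subset_closure (Set.mem_iUnion₂.mpr
        ⟨(p, q), hS p q hplt hcne, rootElt_mem_rootSet p q hplt c⟩)
    have : M = M' * g := by rw [hM', inv_mul_cancel_right]
    rw [this]
    exact Subgroup.mul_mem _ hM'mem hgmem
end ElemLeg
end Work3
section Work4
namespace ElemLeg
open Matrix
variable {n : ℕ} {F : Type} [Field F] (a b : Fin n) (hab : a < b)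

lemma std_mul_apply (M : Matrix (Fin n) (Fin n) F) (p q i j : Fin n) (c : F) :
    (Matrix.single p q c * M) i j = if i = p then c * M q j else 0 := by
  split_ifs with h
  · subst h; exact Matrix.single_mul_apply_same c _ q j M
  · exact Matrix.single_mul_apply_of_ne c p q i j h M

/-- entries of `∑ k in s, c_k e_{a,k}` -/
lemma sum_std_row_apply (s : Finset (Fin n)) (t : Fin n → F) (i j : Fin n) :
    (∑ k ∈ s, Matrix.single a k (t k)) i j = if i = a ∧ j ∈ s then t j else 0 := by
  classical
  rw [Matrix.sum_apply]
  have hterm : ∀ k ∈ s, Matrix.single a k (t k) i j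
      = if k = j then (if i = a then t k else 0) else 0 := by
    intro k _
    rw [std_apply]
    by_cases h1 : k = j
    · subst h1
      by_cases h2 : i = a
      · subst h2; rw [if_pos ⟨rfl, rfl⟩, if_pos rfl, if_pos rfl]
      · rw [if_neg (fun hh => h2 hh.1.symm), if_pos rfl, if_neg h2]
    · rw [if_neg (fun hh => h1 hh.2), if_neg h1]
  rw [Finset.sum_congr rfl hterm, Finset.sum_ite_eq' s j (fun k => if i = a then t k else 0)]
  by_cases h2 : i = a <;> by_cases h3 : j ∈ s <;> simp [h2, h3]

lemma legMat_mul (t t' : Fin n → F) :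
    (1 + ∑ k ∈ Finset.Ioo a b, Matrix.single k b (t k)) *
      (1 + ∑ k ∈ Finset.Ioo a b, Matrix.single k b (t' k))
    = 1 + ∑ k ∈ Finset.Ioo a b, Matrix.single k b ((t + t') k) := by
  have h0 : (∑ k ∈ Finset.Ioo a b, Matrix.single k b (t k)) *
      (∑ k ∈ Finset.Ioo a b, Matrix.single k b (t' k)) = 0 := by
    rw [Finset.sum_mul_sum]
    refine Finset.sum_eq_zero fun k hk => Finset.sum_eq_zero fun k' hk' => ?_
    exact Matrix.single_mul_single_of_ne _ _ _ _ (ne_of_gt (Finset.mem_Ioo.mp hk').2) _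
  rw [add_mul, one_mul, mul_add, mul_one, h0, add_zero]
  simp only [Pi.add_apply, Matrix.single_add, Finset.sum_add_distrib]
  abel

lemma armMat_mul (t t' : Fin n → F) :
    (1 + ∑ k ∈ Finset.Ioo a b, Matrix.single a k (t k)) *
      (1 + ∑ k ∈ Finset.Ioo a b, Matrix.single a k (t' k))
    = 1 + ∑ k ∈ Finset.Ioo a b, Matrix.single a k ((t + t') k) := by
  have h0 : (∑ k ∈ Finset.Ioo a b, Matrix.single a k (t k)) *
      (∑ k ∈ Finset.Ioo a b, Matrix.single a k (t' k)) = 0 := by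
    rw [Finset.sum_mul_sum]
    refine Finset.sum_eq_zero fun k hk => Finset.sum_eq_zero fun k' hk' => ?_
    exact Matrix.single_mul_single_of_ne _ _ _ _ (ne_of_gt (Finset.mem_Ioo.mp hk).1) _
  rw [add_mul, one_mul, mul_add, mul_one, h0, add_zero]
  simp only [Pi.add_apply, Matrix.single_add, Finset.sum_add_distrib]
  abel

lemma legMat_tri (t : Fin n → F) :
    IsUnitriangular (1 + ∑ k ∈ Finset.Ioo a b, Matrix.single k b (t k)) := by
  constructor
  · intro i
    rw [Matrix.add_apply, Matrix.one_apply_eq, sum_std_apply, if_neg, add_zero]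
    rintro ⟨hi, rfl⟩
    exact absurd (Finset.mem_Ioo.mp hi).2 (lt_irrefl _)
  · intro i j hij
    rw [Matrix.add_apply, Matrix.one_apply_ne (ne_of_gt hij), sum_std_apply, if_neg, add_zero]
    rintro ⟨hi, rfl⟩
    exact absurd ((Finset.mem_Ioo.mp hi).2.trans hij) (lt_irrefl _)

lemma armMat_tri (t : Fin n → F) :
    IsUnitriangular (1 + ∑ k ∈ Finset.Ioo a b, Matrix.single a k (t k)) := by
  constructor
  · intro i
    rw [Matrix.add_apply, Matrix.one_apply_eq, sum_std_row_apply, if_neg, add_zero]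
    rintro ⟨rfl, hi⟩
    exact absurd (Finset.mem_Ioo.mp hi).1 (lt_irrefl _)
  · intro i j hij
    rw [Matrix.add_apply, Matrix.one_apply_ne (ne_of_gt hij), sum_std_row_apply, if_neg, add_zero]
    rintro ⟨rfl, hj⟩
    exact absurd ((Finset.mem_Ioo.mp hj).1.trans hij) (lt_irrefl _)

/-- element `1 + ∑_{a<k<b} t_k e_{k,b}` of `UT n F` -/
def legElt (t : Fin n → F) : UT n F :=
  ⟨⟨1 + ∑ k ∈ Finset.Ioo a b, Matrix.single k b (t k),
    1 + ∑ k ∈ Finset.Ioo a b, Matrix.single k b ((-t) k),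
    by rw [legMat_mul]; simp, by rw [legMat_mul]; simp⟩,
   legMat_tri a b t⟩

lemma mat_legElt (t : Fin n → F) :
    mat (legElt a b t) = 1 + ∑ k ∈ Finset.Ioo a b, Matrix.single k b (t k) := rfl

/-- element `1 + ∑_{a<k<b} t_k e_{a,k}` of `UT n F` -/
def armElt (t : Fin n → F) : UT n F :=
  ⟨⟨1 + ∑ k ∈ Finset.Ioo a b, Matrix.single a k (t k),
    1 + ∑ k ∈ Finset.Ioo a b, Matrix.single a k ((-t) k),
    by rw [armMat_mul]; simp, by rw [armMat_mul]; simp⟩,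
   armMat_tri a b t⟩

lemma mat_armElt (t : Fin n → F) :
    mat (armElt a b t) = 1 + ∑ k ∈ Finset.Ioo a b, Matrix.single a k (t k) := rfl

lemma mat_armElt_inv (t : Fin n → F) :
    mat ((armElt a b t)⁻¹) = 1 + ∑ k ∈ Finset.Ioo a b, Matrix.single a k ((-t) k) := rfl

lemma legElt_mem (t : Fin n → F) : legElt a b t ∈ groupOf n F (leg a b) := by
  refine mem_groupOf_of_support (supp (legElt a b t)).card _ le_rfl ?_
  intro p q hpq hne
  rw [mat_legElt, Matrix.add_apply, Matrix.one_apply_ne (ne_of_lt hpq), sum_std_apply,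
    zero_add] at hne
  by_cases h : p ∈ Finset.Ioo a b ∧ q = b
  · exact ⟨h.2, (Finset.mem_Ioo.mp h.1).1, (Finset.mem_Ioo.mp h.1).2⟩
  · rw [if_neg h] at hne; exact absurd rfl hne

end ElemLeg
end Work4
section Work5
namespace ElemLeg
open Matrix
variable {n : ℕ} {F : Type} [Field F] [Fintype F] (a b : Fin n) (hab : a < b)

instance : Finite (UT n F) := by
  have : Finite (GL (Fin n) F) := inferInstance
  exact Subtype.finite

lemma ab_mem (hab : a < b) : ((a, b) : Fin n × Fin n) ∈ posRoots n \ arm a b :=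
  ⟨hab, fun h => absurd h.2.2 (lt_irrefl b)⟩

lemma rootElt_mem_V (c : F) : rootElt a b hab c ∈ Vgroup n F a b :=
  Subgroup.subset_closure (Set.mem_iUnion₂.mpr
    ⟨(a, b), ab_mem a b hab, rootElt_mem_rootSet a b hab c⟩)

/-- elements of `V` have zero arm entries -/
lemma arm_zero_of_mem_V : ∀ x ∈ Vgroup n F a b, ∀ c : Fin n, a < c → c < b → mat x a c = 0 := by
  refine groupOf_pred (fun M => ∀ c : Fin n, a < c → c < b → mat M a c = 0) ?_ ?_ ?_
  · intro c hac _
    rw [mat_one, Matrix.one_apply_ne (ne_of_lt hac)]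
  · intro x y hx hy c hac hcb
    rw [mat_mul, Matrix.mul_apply]
    refine Finset.sum_eq_zero fun k _ => ?_
    rcases lt_trichotomy k a with h | rfl | h
    · rw [(mat_tri x).2 h, zero_mul]
    · rw [hy c hac hcb, mul_zero]
    · rcases lt_or_ge k b with h2 | h2
      · rw [hx k h h2, zero_mul]
      · rw [(mat_tri y).2 (lt_of_lt_of_le hcb h2), mul_zero]
  · rintro p hp x ⟨d, hd⟩ c hac hcb
    have : mat x = 1 + Matrix.single p.1 p.2 d := hd
    rw [this, Matrix.add_apply, Matrix.one_apply_ne (ne_of_lt hac), std_apply, zero_add]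
    rw [if_neg]
    rintro ⟨rfl, rfl⟩
    exact hp.2 ⟨rfl, hac, hcb⟩

/-- elements of the leg group have the leg shape -/
lemma leg_form : ∀ x ∈ groupOf n F (leg a b),
    ∃ t : Fin n → F, mat x = 1 + ∑ k ∈ Finset.Ioo a b, Matrix.single k b (t k) := by
  refine groupOf_pred _ ⟨0, ?_⟩ ?_ ?_
  · simp [mat_one, Matrix.single_zero]
  · rintro x y ⟨t, ht⟩ ⟨t', ht'⟩
    exact ⟨t + t', by rw [mat_mul, ht, ht', legMat_mul]⟩
  · rintro p hp x ⟨d, hd⟩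
    obtain ⟨hpb, hap, hpb2⟩ := hp
    refine ⟨fun k => if k = p.1 then d else 0, ?_⟩
    have hx : mat x = 1 + Matrix.single p.1 p.2 d := hd
    rw [hx, hpb]
    congr 1
    rw [Finset.sum_eq_single_of_mem p.1 (Finset.mem_Ioo.mpr ⟨hap, hpb2⟩)]
    · simp
    · intro k _ hk
      simp [hk, Matrix.single_zero]

section Datum
variable (f : UT n F → ℂ)

/-- the additive character attached to the datum -/
noncomputable def theta (c : F) : ℂ := f (rootElt a b hab c)

lemma theta_add (hf : IsElemDatum n F a b f) (c d : F) :
    theta a b hab f (c + d) = theta a b hab f c * theta a b hab f d := by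
  unfold theta
  rw [← rootElt_mul a b hab c d]
  exact hf.mul_mem _ (rootElt_mem_V a b hab c) _ (rootElt_mem_V a b hab d)

/-- f is trivial on matrices vanishing on the closed arm (arm together with α) -/
lemma f_triv_W (hf : IsElemDatum n F a b f) : ∀ M : UT n F, (∀ c : Fin n, a < c → c ≤ b → mat M a c = 0) →
    M ∈ Vgroup n F a b ∧ f M = 1 := by
  intro M hM
  have hmem : M ∈ groupOf n F (posRoots n \ (arm a b ∪ {((a, b) : Fin n × Fin n)})) := by
    refine mem_groupOf_of_support (supp M).card M le_rfl ?_
    intro p q hpq hne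
    refine ⟨hpq, ?_⟩
    rintro (harm | hα)
    · obtain ⟨hp1, haq, hqb⟩ := harm
      have hp1' : p = a := hp1
      subst hp1'
      exact hne (hM q haq (le_of_lt hqb))
    · rw [Set.mem_singleton_iff, Prod.mk.injEq] at hα
      obtain ⟨rfl, rfl⟩ := hα
      exact hne (hM q hpq le_rfl)
  revert hmem
  refine groupOf_pred (fun M => M ∈ Vgroup n F a b ∧ f M = 1) ?_ ?_ ?_ M
  · exact ⟨Subgroup.one_mem _, hf.map_one⟩
  · rintro x y ⟨hx1, hx2⟩ ⟨hy1, hy2⟩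
    exact ⟨Subgroup.mul_mem _ hx1 hy1, by rw [hf.mul_mem x hx1 y hy1, hx2, hy2, one_mul]⟩
  · intro p hp x hx
    have hp1 : p ∈ posRoots n \ arm a b := ⟨hp.1, fun h => hp.2 (Or.inl h)⟩
    have hp2 : p ≠ (a, b) := fun h => hp.2 (Or.inr (by rw [h]; rfl))
    refine ⟨Subgroup.subset_closure (Set.mem_iUnion₂.mpr ⟨p, hp1, hx⟩), ?_⟩
    exact hf.triv p hp1 hp2 x hx

/-- value of `f` on elements with zero arm entries -/
lemma f_eq_theta (hf : IsElemDatum n F a b f) (M : UT n F) (hM : ∀ c : Fin n, a < c → c < b → mat M a c = 0) :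
    f M = theta a b hab f (mat M a b) := by
  set c : F := mat M a b with hc
  set g : UT n F := rootElt a b hab c with hg
  set M' : UT n F := g⁻¹ * M with hM'
  have hmat : ∀ j, mat M' a j = mat M a j + (-c) * mat M b j := by
    intro j
    have : mat M' = (1 + Matrix.single a b (-c)) * mat M := by
      rw [hM', mat_mul, mat_rootElt_inv]
    rw [this, add_mul, one_mul, Matrix.add_apply, std_mul_apply, if_pos rfl]
  have hW : ∀ c' : Fin n, a < c' → c' ≤ b → mat M' a c' = 0 := by
    intro c' hac hcb
    rcases lt_or_eq_of_le hcb with h | rfl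
    · rw [hmat, hM c' hac h, (mat_tri M).2 h, mul_zero, add_zero]
    · rw [hmat, (mat_tri M).1, ← hc]; ring
  obtain ⟨hV', hf1⟩ := f_triv_W a b f hf M' hW
  have : M = g * M' := by rw [hM', mul_inv_cancel_left]
  rw [this, hf.mul_mem g (rootElt_mem_V a b hab c) M' hV', hf1, mul_one]
  rfl

end Datum
end ElemLeg
end Work5
section Work6
namespace ElemLeg
open Matrix
variable {n : ℕ} {F : Type} [Field F] [Fintype F] (a b : Fin n) (hab : a < b)

/-- extend a function on a finset by zero -/
noncomputable def ext0 (s : Finset (Fin n)) (t : ↥s → F) : Fin n → F :=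
  fun k => if h : k ∈ s then t ⟨k, h⟩ else 0

lemma armElt_inv (t : Fin n → F) : (armElt a b t)⁻¹ = armElt a b (-t) :=
  mat_inj (by rw [mat_armElt_inv, mat_armElt])

lemma mat_mul_armElt (u : UT n F) (t : Fin n → F) (i j : Fin n) :
    mat (u * armElt a b t) i j
      = mat u i j + (if j ∈ Finset.Ioo a b then mat u i a * t j else 0) := by
  rw [mat_mul, mat_armElt, mul_add, mul_one, Matrix.add_apply, mul_sum_std_row_apply]

/-- the row function of an element -/
noncomputable def rowOf (u : UT n F) : ↥(Finset.Ioo a b) → F := fun c => mat u a c.1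

lemma toFun_mem (u : UT n F) :
    u * (armElt a b (ext0 _ (rowOf a b u)))⁻¹ ∈ Vgroup n F a b := by
  rw [armElt_inv]
  refine mem_groupOf_of_support (supp _).card _ le_rfl ?_
  intro p q hpq hne
  refine ⟨hpq, ?_⟩
  intro harm
  obtain ⟨hp1, haq, hqb⟩ := harm
  have hp1' : p = a := hp1
  apply hne
  rw [hp1']
  have hq : q ∈ Finset.Ioo a b := Finset.mem_Ioo.mpr ⟨haq, hqb⟩
  rw [mat_mul_armElt, if_pos hq, (mat_tri u).1, one_mul, Pi.neg_apply, ext0, dif_pos hq,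
    rowOf]
  ring

/-- the bijection `V × F^{arm} ≃ U` -/
noncomputable def eU : ↥(Vgroup n F a b) × (↥(Finset.Ioo a b) → F) ≃ UT n F where
  toFun vt := vt.1.1 * armElt a b (ext0 _ vt.2)
  invFun u := (⟨u * (armElt a b (ext0 _ (rowOf a b u)))⁻¹, toFun_mem a b u⟩, rowOf a b u)
  left_inv := by
    rintro ⟨⟨v, hv⟩, t⟩
    have hrow : rowOf a b (v * armElt a b (ext0 _ t)) = t := by
      funext c
      rw [rowOf, mat_mul_armElt, if_pos c.2, (mat_tri v).1, one_mul,
        arm_zero_of_mem_V a b v hv c.1 (Finset.mem_Ioo.mp c.2).1 (Finset.mem_Ioo.mp c.2).2,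
        zero_add, ext0, dif_pos c.2]
    refine Prod.ext (Subtype.ext ?_) hrow
    show (v * armElt a b (ext0 _ t)) *
        (armElt a b (ext0 _ (rowOf a b (v * armElt a b (ext0 _ t)))))⁻¹ = v
    rw [hrow]
    exact mul_inv_cancel_right v _
  right_inv := by
    intro u
    exact inv_mul_cancel_right u _
    
lemma mat_legElt_entry (t : Fin n → F) (k : Fin n) (hk : k ∈ Finset.Ioo a b) :
    mat (legElt a b t) k b = t k := by
  rw [mat_legElt, Matrix.add_apply, Matrix.one_apply_ne (ne_of_lt (Finset.mem_Ioo.mp hk).2),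
    sum_std_apply, if_pos ⟨hk, rfl⟩, zero_add]

/-- the bijection `L ≃ F^{leg}` -/
noncomputable def eL : ↥(groupOf n F (leg a b)) ≃ (↥(Finset.Ioo a b) → F) where
  toFun l := fun c => mat l.1 c.1 b
  invFun t := ⟨legElt a b (ext0 _ t), legElt_mem a b _⟩
  left_inv := by
    rintro ⟨l, hl⟩
    dsimp only
    obtain ⟨t', ht'⟩ := leg_form a b l hl
    refine Subtype.ext (mat_inj ?_)
    rw [mat_legElt, ht']
    congr 1
    refine Finset.sum_congr rfl fun k hk => ?_
    congr 1
    rw [ext0, dif_pos hk]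
    rw [Matrix.add_apply, Matrix.one_apply_ne (ne_of_lt (Finset.mem_Ioo.mp hk).2),
      sum_std_apply, if_pos ⟨hk, rfl⟩, zero_add]
  right_inv := by
    intro t
    funext c
    dsimp only
    rw [mat_legElt_entry a b _ c.1 c.2, ext0, dif_pos c.2]

lemma card_eq :
    Nat.card (UT n F) = Nat.card (Vgroup n F a b) * Nat.card (groupOf n F (leg a b)) := by
  rw [← Nat.card_congr (eU a b), Nat.card_prod, Nat.card_congr (eL a b)]

/-- entries of a conjugate of a leg element -/
lemma conj_entry (x y : UT n F) (t : Fin n → F)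
    (hx : mat x = 1 + ∑ k ∈ Finset.Ioo a b, Matrix.single k b (t k)) (i j : Fin n) :
    mat (y⁻¹ * x * y) i j
      = (1 : Matrix (Fin n) (Fin n) F) i j
        + (∑ k ∈ Finset.Ioo a b, mat y⁻¹ i k * t k) * mat y b j := by
  have hAB : mat y⁻¹ * mat y = 1 := by rw [← mat_mul, inv_mul_cancel, mat_one]
  have hm : mat (y⁻¹ * x * y) = mat y⁻¹ * mat x * mat y := by rw [mat_mul, mat_mul]
  rw [hm, hx, mul_add, mul_one, add_mul, hAB, Matrix.add_apply]
  congr 1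
  rw [Matrix.mul_apply, Finset.sum_eq_single b]
  · rw [mul_sum_std_col_apply, if_pos rfl]
  · intro l _ hl
    rw [mul_sum_std_col_apply, if_neg hl, zero_mul]
  · simp

end ElemLeg
end Work6

/-- The restriction of the elementary character `λ^U` at `α` to the leg group
`L = ⟨X_β : β ∈ leg(α)⟩` is the regular character of `L`. -/
theorem elemChar_restrict_leg (n : ℕ) (F : Type) [Field F] [Fintype F] (a b : Fin n)
    (hab : a < b) (f : UT n F → ℂ) (hf : IsElemDatum n F a b f) :
    ∀ x : UT n F, x ∈ groupOf n F (leg a b) →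
      elemChar n F a b f x =
        if x = 1 then (Nat.card (groupOf n F (leg a b)) : ℂ) else 0 := by
  classical
  open ElemLeg in
  intro x hx
  haveI : Fintype (UT n F) := Fintype.ofFinite _
  have hV0 : (Nat.card (Vgroup n F a b) : ℂ) ≠ 0 :=
    Nat.cast_ne_zero.mpr Nat.card_pos.ne'
  simp only [elemChar, ind]
  by_cases h1 : x = 1
  · subst h1
    rw [if_pos rfl]
    have hterm : ∀ y : UT n F,
        (if y⁻¹ * 1 * y ∈ Vgroup n F a b then f (y⁻¹ * 1 * y) else 0) = 1 := by
      intro y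
      rw [mul_one, inv_mul_cancel, if_pos (Subgroup.one_mem _), hf.map_one]
    rw [finsum_eq_sum_of_fintype, Finset.sum_congr rfl (fun y _ => hterm y),
      Finset.sum_const, Finset.card_univ, nsmul_eq_mul, mul_one,
      ← Nat.card_eq_fintype_card, ElemLeg.card_eq a b]
    push_cast
    field_simp
  · rw [if_neg h1]
    obtain ⟨t, ht⟩ := ElemLeg.leg_form a b x hx
    have hex : ∃ k₀ ∈ Finset.Ioo a b, t k₀ ≠ 0 := by
      by_contra hc
      push_neg at hc
      apply h1
      apply ElemLeg.mat_inj
      rw [ht, ElemLeg.mat_one]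
      have hz : ∑ k ∈ Finset.Ioo a b, Matrix.single k b (t k) = 0 :=
        Finset.sum_eq_zero fun k hk => by rw [hc k hk, Matrix.single_zero]
      rw [hz, add_zero]
    obtain ⟨k₀, hk₀, ht₀⟩ := hex
    obtain ⟨hak₀, hk₀b⟩ := Finset.mem_Ioo.mp hk₀
    obtain ⟨x₀, hx₀m, hx₀⟩ := hf.nontriv
    obtain ⟨c₀, hc₀⟩ := hx₀m
    have hx₀e : x₀ = ElemLeg.rootElt a b hab c₀ := ElemLeg.mat_inj hc₀
    have hθ : ElemLeg.theta a b hab f c₀ ≠ 1 := by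
      rw [ElemLeg.theta, ← hx₀e]; exact hx₀
    set g : UT n F → ℂ :=
      fun y => ElemLeg.theta a b hab f (∑ k ∈ Finset.Ioo a b, ElemLeg.mat y a k * t k)
      with hgdef
    have hterm : ∀ y : UT n F,
        (if y⁻¹ * x * y ∈ Vgroup n F a b then f (y⁻¹ * x * y) else 0) = g y⁻¹ := by
      intro y
      have harmz : ∀ c : Fin n, a < c → c < b → ElemLeg.mat (y⁻¹ * x * y) a c = 0 := by
        intro c hac hcb
        rw [ElemLeg.conj_entry a b x y t ht, Matrix.one_apply_ne (ne_of_lt hac),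
          (ElemLeg.mat_tri y).2 hcb, mul_zero, add_zero]
      have hVm : y⁻¹ * x * y ∈ Vgroup n F a b := by
        refine ElemLeg.mem_groupOf_of_support (ElemLeg.supp _).card _ le_rfl ?_
        intro p q hpq hne
        refine ⟨hpq, ?_⟩
        intro harm
        obtain ⟨hp1, haq, hqb⟩ := harm
        have hp1' : p = a := hp1
        apply hne
        rw [hp1']
        exact harmz q haq hqb
      rw [if_pos hVm, ElemLeg.f_eq_theta a b hab f hf _ harmz, hgdef]
      congr 1
      rw [ElemLeg.conj_entry a b x y t ht, Matrix.one_apply_ne (ne_of_lt hab),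
        (ElemLeg.mat_tri y).1, mul_one, zero_add]
    rw [finsum_eq_sum_of_fintype, Finset.sum_congr rfl (fun y _ => hterm y)]
    have h2 : ∑ y : UT n F, g y⁻¹ = ∑ y : UT n F, g y :=
      Equiv.sum_comp (Equiv.inv (UT n F)) g
    set m : UT n F := ElemLeg.rootElt a k₀ hak₀ (c₀ * (t k₀)⁻¹) with hm
    have h3 : ∀ y : UT n F, g (y * m) = ElemLeg.theta a b hab f c₀ * g y := by
      intro y
      have hentry : ∀ k, ElemLeg.mat (y * m) a k
          = ElemLeg.mat y a k + (if k = k₀ then c₀ * (t k₀)⁻¹ else 0) := by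
        intro k
        rw [ElemLeg.mat_mul, hm, ElemLeg.mat_rootElt, mul_add, mul_one, Matrix.add_apply,
          ElemLeg.mul_std_apply]
        congr 1
        split_ifs with h
        · rw [(ElemLeg.mat_tri y).1, one_mul]
        · rfl
      have hsum : ∑ k ∈ Finset.Ioo a b, ElemLeg.mat (y * m) a k * t k
          = (∑ k ∈ Finset.Ioo a b, ElemLeg.mat y a k * t k) + c₀ := by
        rw [Finset.sum_congr rfl (fun k _ => by rw [hentry k, add_mul])]
        rw [Finset.sum_add_distrib]
        congr 1
        have : ∀ k ∈ Finset.Ioo a b, (if k = k₀ then c₀ * (t k₀)⁻¹ else 0) * t k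
            = if k = k₀ then c₀ * (t k₀)⁻¹ * t k₀ else 0 := by
          intro k _
          split_ifs with h
          · rw [h]
          · rw [zero_mul]
        rw [Finset.sum_congr rfl this, Finset.sum_ite_eq' (Finset.Ioo a b) k₀, if_pos hk₀,
          mul_assoc, inv_mul_cancel₀ ht₀, mul_one]
      rw [hgdef]
      show ElemLeg.theta a b hab f _ = _
      rw [hsum, ElemLeg.theta_add a b hab f hf, mul_comm]
    have h4 : ∑ y : UT n F, g y = 0 := by
      have h5 : ∑ y : UT n F, g y = ∑ y : UT n F, g (y * m) :=
        (Equiv.sum_comp (Equiv.mulRight m) g).symm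
      rw [Finset.sum_congr rfl (fun y _ => h3 y), ← Finset.mul_sum] at h5
      by_contra hS
      exact hθ ((mul_left_eq_self₀.mp h5.symm).resolve_right hS)
    rw [h2, h4, mul_zero]
end

section
/- For a basic set D (a set of pairwise separate positive roots) and a choice φ = {λ_α}_{α∈D} of elementary character data, the basic character ξ_{D,φ} = ⊗_{α∈D} λ_α^U equals the monomial character (⊗_{α∈D} λ_α|_{V_D})^U, where V_D = ∩_{α∈D} V_α; in particular every basic character is induced from a linear character of a subgroup. -/
open Matrix CategoryTheory
open scoped Classical

namespace MackeyAux

variable {G : Type} [Group G]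

/-- summand of the induced character -/
noncomputable def cind (H : Subgroup G) (f : G → ℂ) (t x : G) : ℂ :=
  if x⁻¹ * t * x ∈ H then f (x⁻¹ * t * x) else 0

lemma ind_eq_sum [Fintype G] (H : Subgroup G) (f : G → ℂ) (t : G) :
    ind H f t = (Nat.card H : ℂ)⁻¹ * ∑ x : G, cind H f t x := by
  rw [ind]
  congr 1
  exact finsum_eq_sum_of_fintype _

lemma conj_ite (V : Subgroup G) (f : G → ℂ)
    (hf : ∀ x ∈ V, ∀ y ∈ V, f (x * y) = f x * f y) (hf1 : f 1 = 1)
    {v : G} (hv : v ∈ V) (s : G) :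
    (if v * s * v⁻¹ ∈ V then f (v * s * v⁻¹) else 0) = if s ∈ V then f s else 0 := by
  have hmem : v * s * v⁻¹ ∈ V ↔ s ∈ V := by
    constructor
    · intro h
      have := V.mul_mem (V.mul_mem (V.inv_mem hv) h) hv
      simpa [mul_assoc] using this
    · intro h
      exact V.mul_mem (V.mul_mem hv h) (V.inv_mem hv)
  by_cases hs : s ∈ V
  · rw [if_pos (hmem.mpr hs), if_pos hs]
    have hinv : f v * f v⁻¹ = 1 := by
      rw [← hf v hv v⁻¹ (V.inv_mem hv)]
      simp [hf1]
    calc f (v * s * v⁻¹) = f v * f s * f v⁻¹ := by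
          rw [hf (v * s) (V.mul_mem hv hs) v⁻¹ (V.inv_mem hv), hf v hv s hs]
      _ = f s := by
          rw [mul_comm (f v) (f s), mul_assoc, hinv, mul_one]
  · rw [if_neg (fun h => hs (hmem.mp h)), if_neg hs]

lemma cind_mul_right (V : Subgroup G) (f : G → ℂ)
    (hf : ∀ x ∈ V, ∀ y ∈ V, f (x * y) = f x * f y) (hf1 : f 1 = 1)
    {v : G} (hv : v ∈ V) (t z : G) :
    cind V f t (z * v⁻¹) = cind V f t z := by
  unfold cind
  have e1 : (z * v⁻¹)⁻¹ * t * (z * v⁻¹) = v * (z⁻¹ * t * z) * v⁻¹ := by group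
  rw [e1, conj_ite V f hf hf1 hv]

lemma cind_mul_right' (W : Subgroup G) (g : G → ℂ)
    (hg : ∀ x ∈ W, ∀ y ∈ W, g (x * y) = g x * g y) (hg1 : g 1 = 1)
    {w : G} (hw : w ∈ W) (t z : G) :
    cind W g t (z * w) = cind W g t z := by
  have := cind_mul_right W g hg hg1 (W.inv_mem hw) t z
  simpa using this

lemma cind_inf (V W : Subgroup G) (f g : G → ℂ) (t z : G) :
    cind (V ⊓ W) (fun u => f u * g u) t z = cind V f t z * cind W g t z := by
  unfold cind
  by_cases hv : z⁻¹ * t * z ∈ V <;> by_cases hw : z⁻¹ * t * z ∈ W <;>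
    simp [Subgroup.mem_inf, hv, hw]

lemma sum_mul_decomp [Fintype G] (V W : Subgroup G)
    (hsurj : ∀ u : G, ∃ v ∈ V, ∃ w ∈ W, u = v * w) (H : G → ℂ) :
    ∑ p : V × W, H ((p.1 : G) * (p.2 : G)) = (Nat.card (V ⊓ W : Subgroup G) : ℂ) * ∑ s : G, H s := by
  classical
  choose v0 hv0 w0 hw0 hvw using hsurj
  have keyW : ∀ (v w : G), v ∈ V → w ∈ W → (v0 (v * w))⁻¹ * v ∈ W := by
    intro v w hvV hwW
    have h := hvw (v * w)
    have h2 : (v0 (v * w))⁻¹ * v = w0 (v * w) * w⁻¹ := by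
      have h3 := congrArg (fun z => (v0 (v * w))⁻¹ * z * w⁻¹) h
      simpa [mul_assoc] using h3
    rw [h2]
    exact W.mul_mem (hw0 _) (W.inv_mem hwW)
  have hs0 : ∀ (d : (V ⊓ W : Subgroup G)) (s : G),
      (v0 s * (d : G)) * ((d : G)⁻¹ * w0 s) = s := by
    intro d s
    rw [mul_assoc, mul_inv_cancel_left]
    exact (hvw s).symm
  let e : (V ⊓ W : Subgroup G) × G ≃ V × W :=
  { toFun := fun d =>
      (⟨v0 d.2 * (d.1 : G), V.mul_mem (hv0 d.2) d.1.2.1⟩,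
       ⟨(d.1 : G)⁻¹ * w0 d.2, W.mul_mem (W.inv_mem d.1.2.2) (hw0 d.2)⟩)
    invFun := fun p =>
      (⟨(v0 ((p.1 : G) * (p.2 : G)))⁻¹ * (p.1 : G),
        ⟨V.mul_mem (V.inv_mem (hv0 _)) p.1.2, keyW _ _ p.1.2 p.2.2⟩⟩,
       (p.1 : G) * (p.2 : G))
    left_inv := by
      rintro ⟨d, s⟩
      refine Prod.ext (Subtype.ext ?_) ?_
      · show (v0 ((v0 s * (d : G)) * ((d : G)⁻¹ * w0 s)))⁻¹ * (v0 s * (d : G)) = (d : G)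
        rw [hs0 d s]
        exact inv_mul_cancel_left _ _
      · exact hs0 d s
    right_inv := by
      rintro ⟨v, w⟩
      have h1 : v0 ((v : G) * w) * ((v0 ((v : G) * w))⁻¹ * (v : G)) = (v : G) :=
        mul_inv_cancel_left _ _
      have h2 : ((v0 ((v : G) * w))⁻¹ * (v : G))⁻¹ * w0 ((v : G) * w) = (w : G) := by
        rw [_root_.mul_inv_rev, inv_inv, mul_assoc, ← hvw ((v : G) * (w : G))]
        exact inv_mul_cancel_left _ _
      exact Prod.ext (Subtype.ext h1) (Subtype.ext h2) }
  have hcomp := Equiv.sum_comp e (fun p : V × W => H ((p.1 : G) * (p.2 : G)))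
  rw [← hcomp]
  have heval : ∀ d : (V ⊓ W : Subgroup G) × G,
      H (((e d).1 : G) * ((e d).2 : G)) = H d.2 := by
    rintro ⟨d, s⟩
    show H ((v0 s * (d : G)) * ((d : G)⁻¹ * w0 s)) = H s
    rw [hs0 d s]
  rw [Finset.sum_congr rfl (fun d _ => heval d)]
  rw [Fintype.sum_prod_type]
  simp [Finset.sum_const, Nat.card_eq_fintype_card, mul_comm]

lemma mackey [Finite G] (V W : Subgroup G) (f g : G → ℂ)
    (hf : ∀ x ∈ V, ∀ y ∈ V, f (x * y) = f x * f y) (hf1 : f 1 = 1)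
    (hg : ∀ x ∈ W, ∀ y ∈ W, g (x * y) = g x * g y) (hg1 : g 1 = 1)
    (hsurj : ∀ u : G, ∃ v ∈ V, ∃ w ∈ W, u = v * w) :
    (fun u => ind V f u * ind W g u) = ind (V ⊓ W) (fun u => f u * g u) := by
  classical
  letI : Fintype G := Fintype.ofFinite G
  funext t
  set S1 : ℂ := ∑ x : G, cind V f t x with hS1
  set S2 : ℂ := ∑ x : G, cind W g t x with hS2
  set S : ℂ := ∑ x : G, cind (V ⊓ W) (fun u => f u * g u) t x with hS
  have key : (Nat.card (V ⊓ W : Subgroup G) : ℂ) * (S1 * S2)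
      = (Nat.card V : ℂ) * (Nat.card W : ℂ) * S := by
    have T1 : ∑ x : G, ∑ p : V × W, cind V f t x * cind W g t (x * ((p.1 : G) * (p.2 : G)))
        = (Nat.card (V ⊓ W : Subgroup G) : ℂ) * (S1 * S2) := by
      have hx : ∀ x : G, ∑ p : V × W, cind V f t x * cind W g t (x * ((p.1 : G) * (p.2 : G)))
          = cind V f t x * ((Nat.card (V ⊓ W : Subgroup G) : ℂ) * S2) := by
        intro x
        rw [← Finset.mul_sum]
        congr 1
        rw [sum_mul_decomp V W hsurj (fun u => cind W g t (x * u))]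
        congr 1
        rw [hS2]
        exact Equiv.sum_comp (Equiv.mulLeft x) (cind W g t)
      rw [Finset.sum_congr rfl (fun x _ => hx x), ← Finset.sum_mul, ← hS1]
      ring
    have T2 : ∑ x : G, ∑ p : V × W, cind V f t x * cind W g t (x * ((p.1 : G) * (p.2 : G)))
        = (Nat.card V : ℂ) * (Nat.card W : ℂ) * S := by
      rw [Finset.sum_comm]
      have hp : ∀ p : V × W,
          ∑ x : G, cind V f t x * cind W g t (x * ((p.1 : G) * (p.2 : G))) = S := by
        rintro ⟨v, w⟩
        rw [← Equiv.sum_comp (Equiv.mulRight ((v : G))⁻¹)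
          (fun x => cind V f t x * cind W g t (x * ((v : G) * (w : G))))]
        rw [hS]
        refine Finset.sum_congr rfl (fun z _ => ?_)
        have e1 : (Equiv.mulRight ((v : G))⁻¹) z = z * (v : G)⁻¹ := rfl
        rw [e1]
        have e2 : z * (v : G)⁻¹ * ((v : G) * (w : G)) = z * (w : G) := by group
        rw [e2, cind_mul_right V f hf hf1 v.2 t z, cind_mul_right' W g hg hg1 w.2 t z,
          cind_inf]
      rw [Finset.sum_congr rfl (fun p _ => hp p), Finset.sum_const]
      simp only [Finset.card_univ, Fintype.card_prod, nsmul_eq_mul, Nat.cast_mul,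
        Nat.card_eq_fintype_card]
    rw [← T1, T2]
  have hV0 : (Nat.card V : ℂ) ≠ 0 := by
    have : 0 < Nat.card V := Nat.card_pos
    exact_mod_cast this.ne'
  have hW0 : (Nat.card W : ℂ) ≠ 0 := by
    have : 0 < Nat.card W := Nat.card_pos
    exact_mod_cast this.ne'
  have hVW0 : (Nat.card (V ⊓ W : Subgroup G) : ℂ) ≠ 0 := by
    have : 0 < Nat.card (V ⊓ W : Subgroup G) := Nat.card_pos
    exact_mod_cast this.ne'
  rw [ind_eq_sum, ind_eq_sum, ind_eq_sum, ← hS1, ← hS2, ← hS]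
  have hS12 : S1 * S2 = (Nat.card (V ⊓ W : Subgroup G) : ℂ)⁻¹ *
      ((Nat.card V : ℂ) * (Nat.card W : ℂ) * S) := by
    rw [eq_inv_mul_iff_mul_eq₀ hVW0]
    exact key
  have expand : (Nat.card V : ℂ)⁻¹ * S1 * ((Nat.card W : ℂ)⁻¹ * S2)
      = ((Nat.card V : ℂ) * (Nat.card W : ℂ))⁻¹ * (S1 * S2) := by
    rw [mul_inv]; ring
  rw [expand, hS12,
    show (Nat.card (V ⊓ W : Subgroup G) : ℂ)⁻¹ * ((Nat.card V : ℂ) * (Nat.card W : ℂ) * S)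
      = ((Nat.card V : ℂ) * (Nat.card W : ℂ)) * ((Nat.card (V ⊓ W : Subgroup G) : ℂ)⁻¹ * S)
      from by ring]
  exact inv_mul_cancel_left₀ (mul_ne_zero hV0 hW0) _

end MackeyAux

namespace BasicAux
open Matrix
variable {n : ℕ} {F : Type} [Field F]

/-- entry matrix of an element of `UT n F` -/
def mat (M : UT n F) : Matrix (Fin n) (Fin n) F :=
  ((M : GL (Fin n) F) : Matrix (Fin n) (Fin n) F)

lemma mat_mul (M N : UT n F) : mat (M * N) = mat M * mat N := rfl

lemma mat_diag (M : UT n F) (i : Fin n) : mat M i i = 1 := M.2.1 i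

lemma mat_lower (M : UT n F) {i j : Fin n} (h : j < i) : mat M i j = 0 := M.2.2 h

lemma ut_ext {M N : UT n F} (h : mat M = mat N) : M = N :=
  Subtype.ext (Units.ext h)

lemma elem_mul_elem (i j : Fin n) (h : j ≠ i) (c d : F) :
    (1 + Matrix.single i j c) * (1 + Matrix.single i j d)
      = 1 + Matrix.single i j (c + d) := by
  have h0 : Matrix.single i j c * Matrix.single i j d = 0 :=
    Matrix.single_mul_single_of_ne c i j i h d
  simp only [mul_add, add_mul, one_mul, mul_one, h0, add_zero]
  rw [Matrix.single_add]
  abel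

/-- elementary root element as a unit -/
def elemGL (i j : Fin n) (h : j ≠ i) (c : F) : GL (Fin n) F :=
  ⟨1 + Matrix.single i j c, 1 + Matrix.single i j (-c),
   by rw [elem_mul_elem i j h, add_neg_cancel, Matrix.single_zero, add_zero],
   by rw [elem_mul_elem i j h, neg_add_cancel, Matrix.single_zero, add_zero]⟩

lemma isUnitriangular_one_add_std {i j : Fin n} (hij : i < j) (c : F) :
    IsUnitriangular (1 + Matrix.single i j c) := by
  constructor
  · intro k
    rw [Matrix.add_apply, Matrix.one_apply_eq,
      Matrix.single_apply_of_ne _ _ _ _ _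
        (by rintro ⟨rfl, rfl⟩; exact absurd hij (lt_irrefl _))]
    exact add_zero 1
  · intro k l hlk
    rw [Matrix.add_apply, Matrix.one_apply_ne (ne_of_gt hlk),
      Matrix.single_apply_of_ne _ _ _ _ _ ?_, add_zero]
    rintro ⟨rfl, rfl⟩
    exact absurd hij (not_lt.mpr hlk.le)

/-- elementary root element in `UT n F` -/
def elemUT (i j : Fin n) (hij : i < j) (c : F) : UT n F :=
  ⟨elemGL i j (ne_of_gt hij) c, isUnitriangular_one_add_std hij c⟩

lemma mat_elemUT (i j : Fin n) (hij : i < j) (c : F) :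
    mat (elemUT i j hij c) = 1 + Matrix.single i j c := rfl

lemma mat_elemUT_inv (i j : Fin n) (hij : i < j) (c : F) :
    mat ((elemUT i j hij c)⁻¹) = 1 + Matrix.single i j (-c) := rfl

lemma elemUT_mem_rootSet (i j : Fin n) (hij : i < j) (c : F) :
    elemUT i j hij c ∈ rootSet n F i j := ⟨c, rfl⟩

lemma rootSet_subset_Vgroup {a b i j : Fin n} (hij : i < j) (hnarm : (i, j) ∉ arm a b) :
    rootSet n F i j ⊆ (Vgroup n F a b : Set (UT n F)) := by
  intro x hx
  apply Subgroup.subset_closure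
  exact Set.mem_biUnion (show ((i, j) : Fin n × Fin n) ∈ posRoots n \ arm a b
    from ⟨hij, hnarm⟩) hx

end BasicAux

namespace BasicAux
open Matrix
variable {n : ℕ} {F : Type} [Field F]

lemma mem_arm_iff {a b i j : Fin n} : ((i, j) : Fin n × Fin n) ∈ arm a b ↔
    i = a ∧ a < j ∧ j < b := Iff.rfl

/-- Generation: every unitriangular matrix vanishing on the arm of `(a,b)`
lies in `V_{(a,b)}`. -/
lemma mem_Vgroup_of_arm_zero (a b : Fin n) (M : UT n F)
    (hArm : ∀ k : Fin n, a < k → k < b → mat M a k = 0) :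
    M ∈ Vgroup n F a b := by
  suffices H : ∀ t : ℕ, ∀ M : UT n F,
      (∀ k : Fin n, a < k → k < b → mat M a k = 0) →
      (∀ i k : Fin n, i ≠ k → (k : ℕ) < n - t → mat M i k = 0) →
      M ∈ Vgroup n F a b by
    exact H n M hArm (fun i k _ hk => absurd hk (by omega))
  intro t
  induction t with
  | zero =>
    intro M _ hclean
    have h1 : mat M = 1 := by
      ext i k
      by_cases h : i = k
      · subst h
        rw [mat_diag, Matrix.one_apply_eq]
      · rw [hclean i k h (by omega), Matrix.one_apply_ne h]
    have : M = 1 := ut_ext (by rw [h1]; rfl)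
    rw [this]
    exact Subgroup.one_mem _
  | succ t ih =>
    intro M hArmM hclean
    by_cases hnt : n ≤ t
    · exact ih M hArmM (fun i k hik hk => absurd hk (by omega))
    push_neg at hnt
    have hjn : n - (t + 1) < n := by omega
    set jf : Fin n := ⟨n - (t + 1), hjn⟩ with hjf
    have hinner : ∀ s : Finset (Fin n), ∀ M : UT n F,
        (∀ k : Fin n, a < k → k < b → mat M a k = 0) →
        (∀ i k : Fin n, i ≠ k → (k : ℕ) < n - (t + 1) → mat M i k = 0) →
        (∀ i : Fin n, i ∉ s → i ≠ jf → mat M i jf = 0) →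
        M ∈ Vgroup n F a b := by
      intro s
      induction s using Finset.induction_on with
      | empty =>
        intro M h1 h2 h3
        refine ih M h1 (fun i k hik hk => ?_)
        rcases Nat.lt_or_ge (k : ℕ) (n - (t + 1)) with h | h
        · exact h2 i k hik h
        · have hkj : k = jf := Fin.ext (by simp [hjf]; omega)
          rw [hkj]
          rw [hkj] at hik
          exact h3 i (Finset.notMem_empty i) hik
      | @insert i s hi ihs =>
        intro M h1 h2 h3
        by_cases heasy : i = jf ∨ mat M i jf = 0
        · refine ihs M h1 h2 (fun i' hi' hne => ?_)
          by_cases hii : i' = i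
          · rcases heasy with h | h
            · exact absurd (hii.trans h) hne
            · rw [hii]; exact h
          · exact h3 i' (by simp [Finset.mem_insert, hii, hi']) hne
        push_neg at heasy
        obtain ⟨hne_jf, hzero⟩ := heasy
        have hij : i < jf := by
          rcases lt_trichotomy i jf with h | h | h
          · exact h
          · exact absurd h hne_jf
          · exact absurd (mat_lower M h) hzero
        by_cases harm : i = a ∧ jf < b
        · refine absurd ?_ hzero
          have := h1 jf (by rw [← harm.1]; exact hij) harm.2
          rw [harm.1]
          exact this
        -- main clearing step
        set c : F := mat M i jf with hc
        set x : UT n F := elemUT i jf hij c with hx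
        have hxV : x ∈ Vgroup n F a b := by
          refine rootSet_subset_Vgroup hij (fun hmem => harm ?_) (elemUT_mem_rootSet i jf hij c)
          exact ⟨hmem.1, hmem.2.2⟩
        have hentry : ∀ r s' : Fin n,
            mat (x⁻¹ * M) r s' = mat M r s' + (if r = i then -c * mat M jf s' else 0) := by
          intro r s'
          rw [mat_mul, mat_elemUT_inv, add_mul, one_mul, Matrix.add_apply]
          congr 1
          by_cases hr : r = i
          · rw [if_pos hr, hr]
            exact Matrix.single_mul_apply_same (-c) i jf s' (mat M)
          · rw [if_neg hr]
            exact Matrix.single_mul_apply_of_ne (-c) i jf r s' hr (mat M)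
        have hmem' : (x⁻¹ * M) ∈ Vgroup n F a b := by
          refine ihs (x⁻¹ * M) ?_ ?_ ?_
          · intro k hak hkb
            rw [hentry]
            rw [h1 k hak hkb, zero_add]
            by_cases hai : a = i
            · rw [if_pos hai]
              have hjb : b ≤ jf := by
                by_contra hbf
                exact harm ⟨hai.symm, not_le.mp hbf⟩
              rw [mat_lower M (lt_of_lt_of_le hkb hjb), mul_zero]
            · rw [if_neg hai]
          · intro i' k hik hk
            rw [hentry]
            rw [h2 i' k hik hk, zero_add]
            have hkjf : k < jf := by
              change (k : ℕ) < (jf : ℕ)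
              simpa [hjf] using hk
            by_cases hii : i' = i
            · rw [if_pos hii, mat_lower M hkjf, mul_zero]
            · rw [if_neg hii]
          · intro i' hi' hne
            rw [hentry]
            by_cases hii : i' = i
            · rw [if_pos hii, hii, mat_diag, mul_one, ← hc, add_neg_cancel]
            · rw [if_neg hii, h3 i' (by simp [Finset.mem_insert, hii, hi']) hne, zero_add]
        have := Subgroup.mul_mem _ hxV hmem'
        rwa [mul_inv_cancel_left] at this
    exact hinner Finset.univ M hArmM hclean (fun i hi _ => absurd (Finset.mem_univ i) hi)

end BasicAux

namespace BasicAux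
open Matrix
variable {n : ℕ} {F : Type} [Field F]

section corrector
variable (a b : Fin n) (u : UT n F)

/-- row correction matrix -/
def corr : Matrix (Fin n) (Fin n) F :=
  ∑ k ∈ Finset.Ioo a b, Matrix.single a k (mat u a k)

lemma corr_apply (r s : Fin n) :
    corr a b u r s = if r = a ∧ s ∈ Finset.Ioo a b then mat u a s else 0 := by
  rw [corr, Matrix.sum_apply]
  by_cases hr : r = a
  · by_cases hs : s ∈ Finset.Ioo a b
    · rw [Finset.sum_eq_single_of_mem s hs
        (fun m _ hm => Matrix.single_apply_of_ne _ _ _ _ _ (fun h => hm h.2)),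
        if_pos ⟨hr, hs⟩, hr]
      exact Matrix.single_apply_same a s _
    · rw [if_neg (fun h => hs h.2)]
      exact Finset.sum_eq_zero (fun m hm => Matrix.single_apply_of_ne _ _ _ _ _
        (fun h => hs (h.2 ▸ hm)))
  · rw [if_neg (fun h => hr h.1)]
    exact Finset.sum_eq_zero (fun m _ => Matrix.single_apply_of_ne _ _ _ _ _
      (fun h => hr h.1.symm))

lemma corr_mul_corr : corr a b u * corr a b u = 0 := by
  ext r s
  rw [Matrix.mul_apply]
  refine Finset.sum_eq_zero (fun m _ => ?_)
  rw [corr_apply, corr_apply]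
  by_cases h1 : r = a ∧ m ∈ Finset.Ioo a b
  · have hma : ¬(m = a ∧ s ∈ Finset.Ioo a b) := by
      rintro ⟨rfl, -⟩
      exact absurd (Finset.mem_Ioo.mp h1.2).1 (lt_irrefl _)
    rw [if_neg hma, mul_zero]
  · rw [if_neg h1, zero_mul]

/-- the arm corrector element of `UT n F` -/
def corrUT : UT n F :=
  ⟨⟨1 + corr a b u, 1 - corr a b u,
    by rw [mul_sub, mul_one, add_mul, one_mul, corr_mul_corr, add_zero,
      add_sub_cancel_right],
    by rw [sub_mul, one_mul, mul_add, mul_one, corr_mul_corr, add_zero,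
      add_sub_cancel_right]⟩,
   by
    constructor
    · intro k
      show (1 + corr a b u) k k = 1
      rw [Matrix.add_apply, Matrix.one_apply_eq, corr_apply]
      rw [if_neg, add_zero]
      rintro ⟨rfl, hk⟩
      exact absurd (Finset.mem_Ioo.mp hk).1 (lt_irrefl _)
    · intro r s hsr
      show (1 + corr a b u) r s = 0
      rw [Matrix.add_apply, Matrix.one_apply_ne (ne_of_gt hsr), corr_apply]
      rw [if_neg, add_zero]
      rintro ⟨rfl, hk⟩
      exact absurd ((Finset.mem_Ioo.mp hk).1.trans hsr) (lt_irrefl _)⟩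

lemma mat_corrUT : mat (corrUT a b u) = 1 + corr a b u := rfl

lemma mat_corrUT_inv : mat ((corrUT a b u)⁻¹) = 1 - corr a b u := rfl

end corrector

lemma surj_decomp (q : Fin n × Fin n) (hq : q.1 < q.2)
    (E : Finset (Fin n × Fin n)) (hE : ∀ p ∈ E, p.1 ≠ q.1) (u : UT n F) :
    ∃ v ∈ Vgroup n F q.1 q.2, ∃ w ∈ ⨅ p ∈ E, Vgroup n F p.1 p.2, u = v * w := by
  set a := q.1
  set b := q.2
  refine ⟨u * (corrUT a b u)⁻¹, ?_, corrUT a b u, ?_, (inv_mul_cancel_right u _).symm⟩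
  · apply mem_Vgroup_of_arm_zero
    intro k hak hkb
    have hmat : mat (u * (corrUT a b u)⁻¹) = mat u - mat u * corr a b u := by
      rw [mat_mul, mat_corrUT_inv, mul_sub, mul_one]
    rw [hmat, Matrix.sub_apply]
    have hmul : (mat u * corr a b u) a k = mat u a k := by
      rw [Matrix.mul_apply]
      rw [Finset.sum_eq_single_of_mem a (Finset.mem_univ a) (fun m _ hm => ?_)]
      · rw [corr_apply, if_pos ⟨rfl, Finset.mem_Ioo.mpr ⟨hak, hkb⟩⟩, mat_diag, one_mul]
      · rw [corr_apply, if_neg (fun h => hm h.1), mul_zero]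
    rw [hmul, sub_self]
  · simp only [Subgroup.mem_iInf]
    intro p hp
    apply mem_Vgroup_of_arm_zero
    intro k h1k h2k
    rw [mat_corrUT, Matrix.add_apply, Matrix.one_apply_ne (ne_of_lt h1k), corr_apply,
      if_neg (fun h => hE p hp h.1), add_zero]

end BasicAux

/-- A basic character `ξ_{D,φ} = ⊗_{α ∈ D} λ_α^U` equals the character induced from
the linear character `⊗_{α∈D} λ_α|_{V_D}` of the subgroup `V_D = ∩_{α∈D} V_α`; in
particular every basic character is induced from a linear character of a subgroup. -/
theorem basicChar_monomial (n : ℕ) (F : Type) [Field F] [Fintype F]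
    (D : Finset (Fin n × Fin n)) (hD : IsBasicSet D)
    (phi : Fin n × Fin n → (UT n F → ℂ))
    (hphi : ∀ p ∈ D, IsElemDatum n F p.1 p.2 (phi p)) :
    ∏ p ∈ D, elemChar n F p.1 p.2 (phi p)
      = ind (⨅ p ∈ D, Vgroup n F p.1 p.2) (∏ p ∈ D, phi p) := by
  classical
  haveI hfin : Finite (UT n F) := by
    haveI : Finite (Matrix (Fin n) (Fin n) F) := by infer_instance
    haveI : Finite (GL (Fin n) F) := by
      unfold Matrix.GeneralLinearGroup
      infer_instance
    infer_instance
  have main : ∀ E : Finset (Fin n × Fin n), (∀ p ∈ E, p.1 < p.2) →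
      (∀ p ∈ E, ∀ p' ∈ E, p ≠ p' → Separate p p') →
      (∀ p ∈ E, IsElemDatum n F p.1 p.2 (phi p)) →
      ∏ p ∈ E, elemChar n F p.1 p.2 (phi p)
        = ind (⨅ p ∈ E, Vgroup n F p.1 p.2) (∏ p ∈ E, phi p) := by
    intro E
    induction E using Finset.induction_on with
    | empty =>
      intro _ _ _
      rw [Finset.prod_empty, Finset.prod_empty]
      have htop : (⨅ p ∈ (∅ : Finset (Fin n × Fin n)), Vgroup n F p.1 p.2)
          = (⊤ : Subgroup (UT n F)) := by simp
      rw [htop]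
      funext t
      letI : Fintype (UT n F) := Fintype.ofFinite _
      rw [ind]
      have hsum : ∑ᶠ x : UT n F,
          (if x⁻¹ * t * x ∈ (⊤ : Subgroup (UT n F)) then (1 : UT n F → ℂ) (x⁻¹ * t * x) else 0)
          = (Fintype.card (UT n F) : ℂ) := by
        rw [finsum_eq_sum_of_fintype]
        simp [Finset.sum_const]
      rw [hsum, Subgroup.card_top, Nat.card_eq_fintype_card]
      have hcard : (Fintype.card (UT n F) : ℂ) ≠ 0 := by
        exact_mod_cast (Fintype.card_ne_zero (α := UT n F))
      rw [inv_mul_cancel₀ hcard, Pi.one_apply]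
    | @insert q E hq ihE =>
      intro hpos hsep hphi'
      have hposE : ∀ p ∈ E, p.1 < p.2 := fun p hp => hpos p (Finset.mem_insert_of_mem hp)
      have hsepE : ∀ p ∈ E, ∀ p' ∈ E, p ≠ p' → Separate p p' := fun p hp p' hp' hne =>
        hsep p (Finset.mem_insert_of_mem hp) p' (Finset.mem_insert_of_mem hp') hne
      have hphiE : ∀ p ∈ E, IsElemDatum n F p.1 p.2 (phi p) := fun p hp =>
        hphi' p (Finset.mem_insert_of_mem hp)
      have hIH := ihE hposE hsepE hphiE
      have hq12 : q.1 < q.2 := hpos q (Finset.mem_insert_self q E)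
      have hEq : ∀ p ∈ E, p.1 ≠ q.1 := by
        intro p hp
        have hne : p ≠ q := fun h => hq (h ▸ hp)
        exact (hsep p (Finset.mem_insert_of_mem hp) q (Finset.mem_insert_self q E) hne).1
      have hsurj := BasicAux.surj_decomp (F := F) q hq12 E hEq
      have hdq := hphi' q (Finset.mem_insert_self q E)
      have hWle : ∀ p ∈ E, (⨅ p ∈ E, Vgroup n F p.1 p.2) ≤ Vgroup n F p.1 p.2 := by
        intro p hp
        exact biInf_le (fun p : Fin n × Fin n => Vgroup n F p.1 p.2) hp
      have hg : ∀ x ∈ ⨅ p ∈ E, Vgroup n F p.1 p.2, ∀ y ∈ ⨅ p ∈ E, Vgroup n F p.1 p.2,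
          (∏ p ∈ E, phi p) (x * y) = (∏ p ∈ E, phi p) x * (∏ p ∈ E, phi p) y := by
        intro x hx y hy
        rw [Finset.prod_apply, Finset.prod_apply, Finset.prod_apply,
          ← Finset.prod_mul_distrib]
        refine Finset.prod_congr rfl (fun p hp => ?_)
        exact (hphiE p hp).mul_mem x (hWle p hp hx) y (hWle p hp hy)
      have hg1 : (∏ p ∈ E, phi p) 1 = 1 := by
        rw [Finset.prod_apply]
        exact Finset.prod_eq_one (fun p hp => (hphiE p hp).map_one)
      have hmack := MackeyAux.mackey (Vgroup n F q.1 q.2) (⨅ p ∈ E, Vgroup n F p.1 p.2)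
        (phi q) (∏ p ∈ E, phi p) hdq.mul_mem hdq.map_one hg hg1 hsurj
      rw [Finset.prod_insert hq, Finset.prod_insert hq, hIH, Finset.iInf_insert]
      exact hmack
  exact main D hD.2.1 hD.2.2 hphi
end

section
/- For any 1 ≤ k < n-1, let T_k = Σ⁺ \ ({α_{1,k}, α_{k+1,n-1}} ∪ leg(α_{1,k}) ∪ arm(α_{k+1,n-1})). Then T_k is closed under root addition and the subgroup ⟨X_α : α ∈ T_k⟩ of U_n(q) is isomorphic to U_{n-1}(q). -/
open Matrix CategoryTheory
open scoped Classical

section AuxTk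


def unsucc {m : ℕ} (kk i : Fin (m + 1)) (h : i ≠ kk) : Fin m :=
  ⟨if (i : ℕ) < kk then i else i - 1, by
    have h' : (i : ℕ) ≠ kk := fun hc => h (Fin.ext hc)
    have := i.isLt; have := kk.isLt
    split <;> omega⟩

lemma succAbove_unsucc {m : ℕ} (kk i : Fin (m + 1)) (h : i ≠ kk) :
    kk.succAbove (unsucc kk i h) = i := by
  have h' : (i : ℕ) ≠ kk := fun hc => h (Fin.ext hc)
  apply Fin.ext
  simp only [Fin.succAbove, unsucc, Fin.lt_def, Fin.coe_castSucc, Fin.val_succ, Fin.castSucc_mk, Fin.succ_mk, Fin.val_mk]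
  split_ifs <;> simp only [Fin.val_mk] <;> omega

lemma unsucc_succAbove {m : ℕ} (kk : Fin (m + 1)) (j : Fin m) (h : kk.succAbove j ≠ kk) :
    unsucc kk (kk.succAbove j) h = j :=
  (Fin.succAbove_right_injective (p := kk)) (succAbove_unsucc kk _ h)

variable {F : Type} [Field F]

noncomputable def insMat {m : ℕ} (kk : Fin (m + 1)) (M : Matrix (Fin m) (Fin m) F) :
    Matrix (Fin (m + 1)) (Fin (m + 1)) F :=
  fun i j =>
    if hi : i = kk then (if j = kk then 1 else 0)
    else if hj : j = kk then 0 else M (unsucc kk i hi) (unsucc kk j hj)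

lemma insMat_succAbove {m : ℕ} (kk : Fin (m + 1)) (M : Matrix (Fin m) (Fin m) F)
    (i j : Fin m) : insMat kk M (kk.succAbove i) (kk.succAbove j) = M i j := by
  have hi := Fin.succAbove_ne kk i
  have hj := Fin.succAbove_ne kk j
  simp [insMat, dif_neg hi, dif_neg hj, unsucc_succAbove]

lemma insMat_row {m : ℕ} (kk : Fin (m + 1)) (M : Matrix (Fin m) (Fin m) F) (j : Fin (m + 1)) :
    insMat kk M kk j = if j = kk then 1 else 0 := by simp [insMat]

lemma insMat_col {m : ℕ} (kk : Fin (m + 1)) (M : Matrix (Fin m) (Fin m) F) (i : Fin (m + 1))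
    (hi : i ≠ kk) : insMat kk M i kk = 0 := by simp [insMat, dif_neg hi]

lemma insMat_one {m : ℕ} (kk : Fin (m + 1)) : insMat kk (1 : Matrix (Fin m) (Fin m) F) = 1 := by
  funext i j
  by_cases hi : i = kk
  · rw [hi, insMat_row]
    by_cases hj : j = kk
    · rw [if_pos hj, hj, Matrix.one_apply_eq]
    · rw [if_neg hj, Matrix.one_apply_ne (Ne.symm hj)]
  · by_cases hj : j = kk
    · rw [hj, insMat_col kk _ i hi, Matrix.one_apply_ne (fun hc => hi (by rw [hc]))]
    · simp only [insMat, dif_neg hi, dif_neg hj]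
      by_cases hij : i = j
      · subst hij; simp [Matrix.one_apply_eq]
      · rw [Matrix.one_apply_ne hij, Matrix.one_apply_ne]
        intro hc
        exact hij (by rw [← succAbove_unsucc kk i hi, ← succAbove_unsucc kk j hj, hc])

lemma insMat_mul {m : ℕ} (kk : Fin (m + 1)) (M N : Matrix (Fin m) (Fin m) F) :
    insMat kk M * insMat kk N = insMat kk (M * N) := by
  funext i j
  rw [Matrix.mul_apply, Fin.sum_univ_succAbove _ kk]
  by_cases hi : i = kk
  · rw [hi]
    simp only [insMat_row]
    rw [if_true, one_mul, Finset.sum_eq_zero, add_zero]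
    intro l _
    rw [if_neg (Fin.succAbove_ne kk l), zero_mul]
  · rw [insMat_col kk M i hi, zero_mul, zero_add]
    by_cases hj : j = kk
    · rw [hj]
      rw [insMat_col kk (M * N) i hi, Finset.sum_eq_zero]
      intro l _
      rw [insMat_col kk N _ (Fin.succAbove_ne kk l), mul_zero]
    · rw [← succAbove_unsucc kk i hi, ← succAbove_unsucc kk j hj]
      rw [insMat_succAbove, Matrix.mul_apply]
      exact Finset.sum_congr rfl fun l _ => by rw [insMat_succAbove, insMat_succAbove]

lemma unsucc_lt_unsucc {m : ℕ} {kk i j : Fin (m + 1)} (hi : i ≠ kk) (hj : j ≠ kk)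
    (h : j < i) : unsucc kk j hj < unsucc kk i hi := by
  rw [← Fin.succAbove_lt_succAbove_iff (p := kk), succAbove_unsucc, succAbove_unsucc]
  exact h

lemma insMat_unitriangular {m : ℕ} (kk : Fin (m + 1)) {M : Matrix (Fin m) (Fin m) F}
    (hM : IsUnitriangular M) : IsUnitriangular (insMat kk M) := by
  constructor
  · intro i
    by_cases hi : i = kk
    · rw [hi, insMat_row, if_pos rfl]
    · conv_lhs => rw [← succAbove_unsucc kk i hi]
      rw [insMat_succAbove]
      exact hM.1 _
  · intro i j hij
    by_cases hi : i = kk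
    · rw [hi, insMat_row, if_neg (hi ▸ ne_of_lt hij)]
    · by_cases hj : j = kk
      · rw [hj, insMat_col kk M i hi]
      · conv_lhs => rw [← succAbove_unsucc kk i hi, ← succAbove_unsucc kk j hj]
        rw [insMat_succAbove]
        exact hM.2 (unsucc_lt_unsucc hi hj hij)

lemma std_apply {n : ℕ} (a b i j : Fin n) (c : F) :
    Matrix.single a b c i j = if a = i ∧ b = j then c else 0 := by
  simp only [Matrix.single, Matrix.of_apply]

lemma std_mul_std {n : ℕ} (a b : Fin n) (hab : a ≠ b) (c d : F) :
    Matrix.single a b c * Matrix.single a b d = 0 := by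
  funext i j
  rw [Matrix.mul_apply, Matrix.zero_apply]
  apply Finset.sum_eq_zero
  intro l _
  rw [std_apply, std_apply]
  split_ifs with h1 h2
  · exact absurd (h2.1.trans h1.2.symm) hab
  · exact mul_zero _
  · exact zero_mul _
  · exact zero_mul _

lemma std_add {n : ℕ} (a b : Fin n) (c d : F) :
    Matrix.single a b c + Matrix.single a b d
      = Matrix.single a b (c + d) := by
  funext i j
  rw [Matrix.add_apply, std_apply, std_apply, std_apply]
  split_ifs with h
  · rfl
  · exact add_zero 0

lemma std_zero {n : ℕ} (a b : Fin n) :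
    Matrix.single a b (0 : F) = 0 := by
  funext i j
  rw [std_apply, Matrix.zero_apply]
  split_ifs <;> rfl

lemma isUnitriangular_one_add_std {n : ℕ} (a b : Fin n) (hab : a < b) (c : F) :
    IsUnitriangular (1 + Matrix.single a b c) := by
  constructor
  · intro i
    rw [Matrix.add_apply, Matrix.one_apply_eq, std_apply, if_neg, add_zero]
    rintro ⟨rfl, rfl⟩
    exact absurd hab (lt_irrefl _)
  · intro i j hij
    rw [Matrix.add_apply, Matrix.one_apply_ne (ne_of_gt hij), std_apply, if_neg, add_zero]
    rintro ⟨rfl, rfl⟩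
    exact absurd hab (not_lt_of_gt hij)

lemma insMat_one_add_std {m : ℕ} (kk : Fin (m + 1)) (a b : Fin m) (c : F) :
    insMat kk (1 + Matrix.single a b c)
      = 1 + Matrix.single (kk.succAbove a) (kk.succAbove b) c := by
  funext i j
  have ha := Fin.succAbove_ne kk a
  have hb := Fin.succAbove_ne kk b
  by_cases hi : i = kk
  · rw [hi, insMat_row, Matrix.add_apply, std_apply,
      if_neg (show ¬(kk.succAbove a = kk ∧ kk.succAbove b = j) from fun h => ha h.1),
      add_zero, Matrix.one_apply]
    simp [eq_comm]
  · by_cases hj : j = kk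
    · rw [hj, insMat_col kk _ i hi, Matrix.add_apply, Matrix.one_apply_ne hi, std_apply,
        if_neg (show ¬(kk.succAbove a = i ∧ kk.succAbove b = kk) from fun h => hb h.2),
        add_zero]
    · conv_lhs => rw [← succAbove_unsucc kk i hi, ← succAbove_unsucc kk j hj]
      conv_rhs => rw [← succAbove_unsucc kk i hi, ← succAbove_unsucc kk j hj]
      rw [insMat_succAbove, Matrix.add_apply, Matrix.add_apply]
      congr 1
      · rw [Matrix.one_apply, Matrix.one_apply]
        by_cases h : unsucc kk i hi = unsucc kk j hj
        · rw [if_pos h, if_pos (by rw [h])]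
        · rw [if_neg h, if_neg (fun hc => h (Fin.succAbove_right_injective (p := kk) hc))]
      · rw [std_apply, std_apply]
        by_cases h : a = unsucc kk i hi ∧ b = unsucc kk j hj
        · rw [if_pos h, if_pos ⟨by rw [h.1], by rw [h.2]⟩]
        · rw [if_neg h, if_neg (fun hc => h ⟨Fin.succAbove_right_injective (p := kk) hc.1,
            Fin.succAbove_right_injective (p := kk) hc.2⟩)]

/-- The embedding `UT m F →* UT (m+1) F` inserting a trivial row/column at `kk`. -/
noncomputable def ΦU {m : ℕ} (kk : Fin (m + 1)) : UT m F →* UT (m + 1) F where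
  toFun M := ⟨⟨insMat kk ((M : GL (Fin m) F) : Matrix (Fin m) (Fin m) F),
      insMat kk (((M : GL (Fin m) F)⁻¹ : GL (Fin m) F) : Matrix (Fin m) (Fin m) F),
      by rw [insMat_mul]; rw [show ((M : GL (Fin m) F) : Matrix (Fin m) (Fin m) F)
            * (((M : GL (Fin m) F)⁻¹ : GL (Fin m) F) : Matrix (Fin m) (Fin m) F) = 1 from
            Units.mul_inv _, insMat_one],
      by rw [insMat_mul]; rw [show (((M : GL (Fin m) F)⁻¹ : GL (Fin m) F)
            : Matrix (Fin m) (Fin m) F)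
            * ((M : GL (Fin m) F) : Matrix (Fin m) (Fin m) F) = 1 from
            Units.inv_mul _, insMat_one]⟩,
    insMat_unitriangular kk M.2⟩
  map_one' := Subtype.ext (Units.ext (insMat_one kk))
  map_mul' A B := Subtype.ext (Units.ext (insMat_mul kk _ _).symm)

lemma ΦU_coe {m : ℕ} (kk : Fin (m + 1)) (M : UT m F) :
    ((ΦU kk M : GL (Fin (m + 1)) F) : Matrix (Fin (m + 1)) (Fin (m + 1)) F)
      = insMat kk ((M : GL (Fin m) F) : Matrix (Fin m) (Fin m) F) := rfl

lemma ΦU_injective {m : ℕ} (kk : Fin (m + 1)) :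
    Function.Injective (ΦU (F := F) kk) := by
  intro A B h
  apply Subtype.ext
  apply Units.ext
  funext i j
  have h2 := congrArg (fun X : UT (m + 1) F =>
    ((X : GL (Fin (m + 1)) F) : Matrix (Fin (m + 1)) (Fin (m + 1)) F)
      (kk.succAbove i) (kk.succAbove j)) h
  simpa [ΦU_coe, insMat_succAbove] using h2

/-- The root element `1 + c·e_{a,b}` of `UT n F`. -/
noncomputable def rootElem {n : ℕ} (a b : Fin n) (hab : a < b) (c : F) : UT n F :=
  ⟨⟨1 + Matrix.single a b c, 1 + Matrix.single a b (-c),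
    by rw [mul_add, mul_one, add_mul, one_mul,
        std_mul_std a b (ne_of_lt hab), add_zero, add_assoc,
        std_add, add_neg_cancel, std_zero, add_zero],
    by rw [mul_add, mul_one, add_mul, one_mul,
        std_mul_std a b (ne_of_lt hab), add_zero, add_assoc,
        std_add, neg_add_cancel, std_zero, add_zero]⟩,
    isUnitriangular_one_add_std a b hab c⟩

lemma rootElem_coe {n : ℕ} (a b : Fin n) (hab : a < b) (c : F) :
    ((rootElem a b hab c : GL (Fin n) F) : Matrix (Fin n) (Fin n) F)
      = 1 + Matrix.single a b c := rfl

lemma rootElem_mem {n : ℕ} (a b : Fin n) (hab : a < b) (c : F) :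
    rootElem a b hab c ∈ rootSet n F a b := ⟨c, rfl⟩

lemma mem_groupOf_of_mem_rootSet {n : ℕ} {S : Set (Fin n × Fin n)} {p : Fin n × Fin n}
    (hp : p ∈ S) {x : UT n F} (hx : x ∈ rootSet n F p.1 p.2) : x ∈ groupOf n F S :=
  Subgroup.subset_closure (Set.mem_biUnion hp hx)

lemma map_groupOf {m : ℕ} (kk : Fin (m + 1)) (S : Set (Fin m × Fin m))
    (S' : Set (Fin (m + 1) × Fin (m + 1)))
    (h : ∀ p ∈ S, (kk.succAbove p.1, kk.succAbove p.2) ∈ S')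
    {M : UT m F} (hM : M ∈ groupOf m F S) : ΦU kk M ∈ groupOf (m + 1) F S' := by
  have h1 : (groupOf m F S).map (ΦU (F := F) kk) ≤ groupOf (m + 1) F S' := by
    rw [groupOf, MonoidHom.map_closure]
    apply Subgroup.closure_le _ |>.2
    rintro y ⟨x, hx, rfl⟩
    rw [Set.mem_iUnion₂] at hx
    obtain ⟨p, hp, c, hc⟩ := hx
    exact mem_groupOf_of_mem_rootSet (h p hp)
      ⟨c, by rw [ΦU_coe, hc, insMat_one_add_std]⟩
  exact h1 (Subgroup.mem_map_of_mem _ hM)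

def colMat {n : ℕ} (b : Fin n) (v : Fin n → F) : Matrix (Fin n) (Fin n) F :=
  fun i j => if j = b then v i else 0

lemma colMat_add {n : ℕ} (b : Fin n) (v w : Fin n → F) :
    colMat b v + colMat b w = colMat b (v + w) := by
  funext i j
  simp only [colMat, Matrix.add_apply, Pi.add_apply]
  split_ifs <;> simp

lemma colMat_zero {n : ℕ} (b : Fin n) : colMat b (0 : Fin n → F) = 0 := by
  funext i j
  simp [colMat]

lemma colMat_mul_colMat {n : ℕ} (b : Fin n) (v w : Fin n → F) (hw : w b = 0) :
    colMat b v * colMat b w = 0 := by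
  funext i j
  rw [Matrix.mul_apply, Matrix.zero_apply]
  apply Finset.sum_eq_zero
  intro l _
  simp only [colMat]
  split_ifs with h1 h2
  · rw [h1, hw, mul_zero]
  · exact mul_zero _
  · exact zero_mul _
  · exact zero_mul _

lemma one_add_colMat_mul {n : ℕ} (b : Fin n) (v w : Fin n → F) (hw : w b = 0) :
    (1 + colMat b v) * (1 + colMat b w) = 1 + colMat b (v + w) := by
  rw [mul_add, mul_one, add_mul, one_mul, colMat_mul_colMat b v w hw, add_zero, add_assoc,
    colMat_add]

lemma isUnitriangular_one_add_colMat {n : ℕ} (b : Fin n) (v : Fin n → F) (hvb : v b = 0)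
    (hlt : ∀ i, v i ≠ 0 → i < b) : IsUnitriangular (1 + colMat b v) := by
  constructor
  · intro i
    rw [Matrix.add_apply, Matrix.one_apply_eq]
    simp only [colMat]
    split_ifs with h
    · rw [h, hvb, add_zero]
    · rw [add_zero]
  · intro i j hij
    rw [Matrix.add_apply, Matrix.one_apply_ne (ne_of_gt hij), zero_add]
    simp only [colMat]
    split_ifs with h
    · rcases eq_or_ne (v i) 0 with h0 | h0
      · exact h0
      · exact absurd (h ▸ hlt i h0) (not_lt_of_gt hij)
    · rfl

noncomputable def colU {n : ℕ} (b : Fin n) (v : Fin n → F) (hvb : v b = 0)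
    (hlt : ∀ i, v i ≠ 0 → i < b) : UT n F :=
  ⟨⟨1 + colMat b v, 1 + colMat b (-v),
    by rw [one_add_colMat_mul b v (-v) (by simp [hvb]), add_neg_cancel, colMat_zero, add_zero],
    by rw [one_add_colMat_mul b (-v) v hvb, neg_add_cancel, colMat_zero, add_zero]⟩,
   isUnitriangular_one_add_colMat b v hvb hlt⟩

lemma col_mem {n : ℕ} (b : Fin n) (s : Finset (Fin n)) :
    ∀ (v : Fin n → F) (hvb : v b = 0) (hlt : ∀ i, v i ≠ 0 → i < b),
      (∀ i ∉ s, v i = 0) → colU b v hvb hlt ∈ groupOf n F (posRoots n) := by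
  induction s using Finset.induction_on with
  | empty =>
    intro v hvb hlt hs
    have hv : v = 0 := funext fun i => hs i (Finset.notMem_empty i)
    have h1 : colU b v hvb hlt = 1 := by
      apply Subtype.ext; apply Units.ext
      show 1 + colMat b v = _
      rw [hv, colMat_zero, add_zero]; rfl
    rw [h1]; exact one_mem _
  | @insert a s ha ih =>
    intro v hvb hlt hs
    by_cases hva : v a = 0
    · exact ih v hvb hlt fun i hi => if h : i = a then h ▸ hva else
        hs i (by simp [hi, h])
    · have hab : a < b := hlt a hva
      have hba : ¬b = a := fun h => (ne_of_lt hab) h.symm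
      set w : Fin n → F := fun i => if i = a then v a else 0 with hw
      set v' : Fin n → F := fun i => if i = a then 0 else v i with hv'
      have hsum : v = w + v' := funext fun i => by by_cases h : i = a <;> simp [hw, hv', h]
      have hwb : w b = 0 := by simp [hw, hba]
      have hv'b : v' b = 0 := by simp [hv', hvb]
      have hltw : ∀ i, w i ≠ 0 → i < b := by
        intro i hi
        by_cases h : i = a
        · rw [h]; exact hab
        · simp [hw, h] at hi
      have hltv' : ∀ i, v' i ≠ 0 → i < b := by
        intro i hi
        apply hlt
        by_cases h : i = a
        · simp [hv', h] at hi
        · simpa [hv', h] using hi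
      have heq : colU b v hvb hlt = colU b w hwb hltw * colU b v' hv'b hltv' := by
        apply Subtype.ext; apply Units.ext
        show 1 + colMat b v = (1 + colMat b w) * (1 + colMat b v')
        rw [one_add_colMat_mul b w v' hv'b, ← hsum]
      rw [heq]
      refine mul_mem ?_ (ih v' hv'b hltv' fun i hi => ?_)
      · have hre : colU b w hwb hltw = rootElem a b hab (v a) := by
          apply Subtype.ext; apply Units.ext
          show 1 + colMat b w = 1 + Matrix.single a b (v a)
          congr 1
          funext i j
          rw [std_apply]
          simp only [colMat, hw]
          by_cases h1 : j = b <;> by_cases h2 : i = a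
          · rw [if_pos h1, if_pos h2, if_pos ⟨h2.symm, h1.symm⟩]
          · rw [if_pos h1, if_neg h2, if_neg (fun hc => h2 hc.1.symm)]
          · rw [if_neg h1, if_neg (fun hc => h1 hc.2.symm)]
          · rw [if_neg h1, if_neg (fun hc => h1 hc.2.symm)]
        rw [hre]
        exact mem_groupOf_of_mem_rootSet (p := (a, b)) hab (rootElem_mem a b hab (v a))
      · by_cases h : i = a
        · simp [hv', h]
        · have hni : i ∉ insert a s := by simp [h, hi]
          simp [hv', h, hs i hni]

lemma UT_gen : ∀ (n : ℕ) (M : UT n F), M ∈ groupOf n F (posRoots n) := by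
  intro n
  induction n with
  | zero =>
    intro M
    have h1 : M = 1 := by
      apply Subtype.ext; apply Units.ext
      funext i j; exact i.elim0
    rw [h1]; exact one_mem _
  | succ m ih =>
    intro M
    set kk : Fin (m + 1) := Fin.last m with hkk
    set A : Matrix (Fin (m + 1)) (Fin (m + 1)) F :=
      ((M : GL (Fin (m + 1)) F) : Matrix (Fin (m + 1)) (Fin (m + 1)) F) with hA
    have hAu : IsUnitriangular A := M.2
    set v : Fin (m + 1) → F := fun i => if i = kk then 0 else A i kk with hv
    have hvb : v kk = 0 := by simp [hv]
    have hlt : ∀ i, v i ≠ 0 → i < kk := by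
      intro i hi
      by_cases h : i = kk
      · simp [hv, h] at hi
      · exact lt_of_le_of_ne (Fin.le_last i) h
    have hrow : ∀ j, A kk j = if j = kk then 1 else 0 := by
      intro j
      by_cases h : j = kk
      · rw [if_pos h, h]; exact hAu.1 kk
      · rw [if_neg h]; exact hAu.2 (lt_of_le_of_ne (Fin.le_last j) h)
    set B : Matrix (Fin (m + 1)) (Fin (m + 1)) F := A - colMat kk v with hB
    have hcol : ∀ i, colMat kk v i kk = v i := fun i => if_pos rfl
    have hBu : IsUnitriangular B := by
      constructor
      · intro i
        show A i i - colMat kk v i i = 1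
        have h0 : colMat kk v i i = 0 := by
          simp only [colMat]
          split_ifs with h
          · rw [h, hvb]
          · rfl
        rw [h0, sub_zero]; exact hAu.1 i
      · intro i j hij
        show A i j - colMat kk v i j = 0
        have hj : ¬j = kk := by
          intro h
          rw [h] at hij
          exact absurd hij (not_lt_of_ge (Fin.le_last i))
        have h0 : colMat kk v i j = 0 := if_neg hj
        rw [h0, sub_zero]; exact hAu.2 hij
    set B0 : Matrix (Fin m) (Fin m) F := fun i j => B (kk.succAbove i) (kk.succAbove j) with hB0
    have hBins : B = insMat kk B0 := by
      funext i j
      by_cases hi : i = kk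
      · rw [hi, insMat_row]
        show A kk j - colMat kk v kk j = _
        have h0 : colMat kk v kk j = 0 := by
          simp only [colMat]
          split_ifs with h
          · exact hvb
          · rfl
        rw [h0, sub_zero, hrow j]
      · by_cases hj : j = kk
        · rw [hj, insMat_col kk B0 i hi]
          show A i kk - colMat kk v i kk = 0
          rw [hcol i, hv]
          simp only [if_neg hi]
          exact sub_self _
        · conv_lhs => rw [← succAbove_unsucc kk i hi, ← succAbove_unsucc kk j hj]
          conv_rhs => rw [← succAbove_unsucc kk i hi, ← succAbove_unsucc kk j hj]
          rw [insMat_succAbove]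
    have hB0u : IsUnitriangular B0 := by
      constructor
      · intro i; exact hBu.1 _
      · intro i j hij
        exact hBu.2 ((Fin.succAbove_lt_succAbove_iff (p := kk)).2 hij)
    have hdet : IsUnit B0.det := by
      rw [Matrix.det_of_upperTriangular hB0u.blockTriangular,
        Finset.prod_congr rfl (fun i _ => hB0u.1 i), Finset.prod_const_one]
      exact isUnit_one
    set M0 : UT m F := ⟨Matrix.nonsingInvUnit B0 hdet, hB0u⟩ with hM0
    have hfact : M = colU kk v hvb hlt * ΦU kk M0 := by
      apply Subtype.ext; apply Units.ext
      show A = (1 + colMat kk v) * insMat kk B0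
      rw [← hBins, add_mul, one_mul]
      show A = A - colMat kk v + colMat kk v * B
      have hcolB : colMat kk v * B = colMat kk v := by
        funext i j
        rw [Matrix.mul_apply]
        rw [Finset.sum_eq_single kk]
        · rw [hcol i]
          have hBrow : B kk j = if j = kk then 1 else 0 := by
            show A kk j - colMat kk v kk j = _
            have h0 : colMat kk v kk j = 0 := by
              simp only [colMat]
              split_ifs with h
              · exact hvb
              · rfl
            rw [h0, sub_zero, hrow j]
          rw [hBrow]
          simp only [colMat]
          split_ifs <;> simp
        · intro l _ hl
          have h0 : colMat kk v i l = 0 := if_neg hl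
          rw [h0, zero_mul]
        · intro h; exact absurd (Finset.mem_univ kk) h
      rw [hcolB, sub_add_cancel]
    rw [hfact]
    refine mul_mem (col_mem kk Finset.univ v hvb hlt fun i hi =>
      absurd (Finset.mem_univ i) hi) ?_
    exact map_groupOf kk (posRoots m) (posRoots (m + 1))
      (fun p hp => (Fin.succAbove_lt_succAbove_iff (p := kk)).2 hp) (ih M0)

end AuxTk

/-- For `1 ≤ k < n-1`, the set
`T_k = Σ⁺ \ ({α_{1,k}, α_{k+1,n-1}} ∪ leg(α_{1,k}) ∪ arm(α_{k+1,n-1}))`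
is closed under root addition, and the subgroup `⟨X_α : α ∈ T_k⟩` of `U_n(q)` is
isomorphic to `U_{n-1}(q)`.  (In position coordinates `α_{1,k} = (0, k)` and
`α_{k+1,n-1} = (k, n-1)`; addition of roots corresponds to concatenation
`(a,b) + (b,d) = (a,d)` of positions.) -/
theorem Tk_closed_and_iso (n k : ℕ) (hk1 : 1 ≤ k) (hk2 : k < n - 1)
    (F : Type) [Field F] [Fintype F] :
    ∀ T : Set (Fin n × Fin n),
      T = posRoots n \
        ({((⟨0, by omega⟩ : Fin n), (⟨k, by omega⟩ : Fin n)),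
          ((⟨k, by omega⟩ : Fin n), (⟨n - 1, by omega⟩ : Fin n))}
          ∪ leg (⟨0, by omega⟩ : Fin n) (⟨k, by omega⟩ : Fin n)
          ∪ arm (⟨k, by omega⟩ : Fin n) (⟨n - 1, by omega⟩ : Fin n)) →
      (∀ p ∈ T, ∀ p' ∈ T, p.2 = p'.1 → (p.1, p'.2) ∈ T) ∧
      Nonempty (groupOf n F T ≃* UT (n - 1) F) := by
  
  intro T hT
  obtain ⟨m, rfl⟩ : ∃ m, n = m + 1 := ⟨n - 1, by omega⟩
  have hchar : ∀ p : Fin (m + 1) × Fin (m + 1),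
      p ∈ T ↔ p.1 < p.2 ∧ p.1 ≠ (⟨k, by omega⟩ : Fin (m + 1))
        ∧ p.2 ≠ (⟨k, by omega⟩ : Fin (m + 1)) := by
    intro p
    obtain ⟨⟨a, ha⟩, ⟨b, hb⟩⟩ := p
    rw [hT]
    simp only [Set.mem_diff, Set.mem_union, Set.mem_insert_iff, Set.mem_singleton_iff,
      Set.mem_setOf_eq, posRoots, leg, arm, Prod.mk.injEq, Fin.mk.injEq, Fin.mk_lt_mk,
      ne_eq, Prod.fst, Prod.snd, Fin.lt_def]
    omega
  constructor
  · intro p hp p' hp' he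
    rw [hchar] at hp hp' ⊢
    refine ⟨?_, hp.2.1, hp'.2.2⟩
    have h2 := hp'.1
    rw [← he] at h2
    exact lt_trans hp.1 h2
  · have hinj := ΦU_injective (F := F) (⟨k, by omega⟩ : Fin (m + 1))
    have e1 : groupOf (m + 1) F T = (ΦU (F := F) (⟨k, by omega⟩ : Fin (m + 1))).range := by
      apply le_antisymm
      · rw [groupOf]
        refine (Subgroup.closure_le _).2 ?_
        rintro x hx
        rw [Set.mem_iUnion₂] at hx
        obtain ⟨p, hp, c, hc⟩ := hx
        obtain ⟨hlt, h1, h2⟩ := (hchar p).1 hp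
        have hlt' : unsucc _ p.1 h1 < unsucc _ p.2 h2 := unsucc_lt_unsucc h2 h1 hlt
        refine MonoidHom.mem_range.2 ⟨rootElem _ _ hlt' c, ?_⟩
        apply Subtype.ext; apply Units.ext
        show insMat _ (1 + Matrix.single _ _ c) = _
        rw [insMat_one_add_std, succAbove_unsucc, succAbove_unsucc, ← hc]
      · rintro x ⟨y, rfl⟩
        exact map_groupOf _ (posRoots m) T
          (fun p hp => (hchar _).2
            ⟨(Fin.succAbove_lt_succAbove_iff (p := (⟨k, by omega⟩ : Fin (m + 1)))).2 hp,
             Fin.succAbove_ne _ p.1, Fin.succAbove_ne _ p.2⟩)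
          (UT_gen m y)
    exact ⟨(MulEquiv.subgroupCongr e1).trans (MonoidHom.ofInjective hinj).symm⟩
end
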